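/- If G is a 5-Ore graph and R ⊊ V(G) with |R| ≥ 5 and p_KY(R) < 12, then R is a collapsible subset of G and p_KY(R) = 9. -/

import Mathlib

open SimpleGraph

namespace Postle

noncomputable def epsC : ℝ := 1 / 21
noncomputable def delC : ℝ := 8 / 21
noncomputable def PC : ℝ := 48 / 21
noncomputable def QC : ℝ := 8 / 21

/-- The degree of a vertex, via the cardinality of its neighbor set. -/
noncomputable def degS {V : Type} (G : SimpleGraph V) (v : V) : ℕ :=
  (G.neighborSet v).ncard

/-- A graph is 5-critical if it is not 4-colorable but every proper subgraph is. -/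
def FiveCritical {V : Type} (G : SimpleGraph V) : Prop :=
  ¬ G.Colorable 4 ∧ ∀ H : SimpleGraph V, H < G → H.Colorable 4

/-- `G` is (isomorphic to) the complete graph `K₅`. -/
def IsK5 {V : Type} (G : SimpleGraph V) : Prop :=
  Nonempty (G ≃g (⊤ : SimpleGraph (Fin 5)))

/-- `T(G)`: the maximum, over collections of pairwise disjoint cliques of size 3 or 4 in `G`,
of (number of 3-cliques) + 2 * (number of 4-cliques); each clique of size `k` contributes
`k - 2`. -/
noncomputable def TT {V : Type} (G : SimpleGraph V) : ℕ :=
  sSup { n : ℕ | ∃ C : Finset (Finset V),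
    ((C : Set (Finset V)).Pairwise fun A B => Disjoint A B) ∧
    (∀ W ∈ C, G.IsClique (W : Set V) ∧ (W.card = 3 ∨ W.card = 4)) ∧
    n = ∑ W ∈ C, (W.card - 2) }

/-- The potential `p(G) = (9+ε)|V(G)| - 4|E(G)| - δ·T(G)` with `ε = 1/21`, `δ = 8/21`. -/
noncomputable def pot {V : Type} (G : SimpleGraph V) : ℝ :=
  (9 + epsC) * (Nat.card V : ℝ) - 4 * (G.edgeSet.ncard : ℝ) - delC * (TT G : ℝ)

/-- `p_G(R) = p(G[R])`. -/
noncomputable def potOn {V : Type} (G : SimpleGraph V) (R : Set V) : ℝ :=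
  pot (G.induce R)

/-- The Kostochka–Yancey potential `p_KY(G) = 9|V(G)| - 4|E(G)|`. -/
noncomputable def potKY {V : Type} (G : SimpleGraph V) : ℝ :=
  9 * (Nat.card V : ℝ) - 4 * (G.edgeSet.ncard : ℝ)

noncomputable def potKYOn {V : Type} (G : SimpleGraph V) (R : Set V) : ℝ :=
  potKY (G.induce R)

/-- `G` is an Ore-composition of `G₁` (the edge side, with replaced edge `xy`) and `G₂`
(the vertex side, with split vertex `z`): delete the edge `xy` of `G₁`, split `z` into two
vertices of positive degree, and identify them with `x` and `y`. The set `S` records which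
neighbors of `z` get attached to `x`. -/
def IsOreComposition {V V₁ V₂ : Type} (G : SimpleGraph V)
    (G₁ : SimpleGraph V₁) (G₂ : SimpleGraph V₂) : Prop :=
  ∃ (x y : V₁) (z : V₂) (f₁ : V₁ ↪ V) (f₂ : {w : V₂ // w ≠ z} ↪ V) (S : Set V₂),
    G₁.Adj x y ∧
    (∀ w ∈ S, G₂.Adj z w) ∧ S.Nonempty ∧ (G₂.neighborSet z \ S).Nonempty ∧
    Set.range ⇑f₁ ∩ Set.range ⇑f₂ = ∅ ∧
    Set.range ⇑f₁ ∪ Set.range ⇑f₂ = Set.univ ∧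
    ∀ a b : V, G.Adj a b ↔
      ((∃ a' b' : V₁, f₁ a' = a ∧ f₁ b' = b ∧ G₁.Adj a' b' ∧
          ¬(a' = x ∧ b' = y) ∧ ¬(a' = y ∧ b' = x)) ∨
       (∃ a' b' : {w : V₂ // w ≠ z}, f₂ a' = a ∧ f₂ b' = b ∧ G₂.Adj a'.1 b'.1) ∨
       (∃ w : {w : V₂ // w ≠ z}, G₂.Adj z w.1 ∧
         ((((a = f₁ x ∧ b = f₂ w) ∨ (b = f₁ x ∧ a = f₂ w)) ∧ w.1 ∈ S) ∨
          (((a = f₁ y ∧ b = f₂ w) ∨ (b = f₁ y ∧ a = f₂ w)) ∧ w.1 ∉ S))))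

/-- A graph is 5-Ore if it can be obtained from copies of `K₅` by repeated Ore-compositions. -/
inductive Is5Ore : {V : Type} → SimpleGraph V → Prop
  | k5 {V : Type} {G : SimpleGraph V} (h : IsK5 G) : Is5Ore G
  | ore {V V₁ V₂ : Type} {G : SimpleGraph V} {G₁ : SimpleGraph V₁} {G₂ : SimpleGraph V₂}
      (h₁ : Is5Ore G₁) (h₂ : Is5Ore G₂) (h : IsOreComposition G G₁ G₂) : Is5Ore G

/-- The boundary of `R`: the vertices of `R` with a neighbor outside `R`. -/
def boundary {V : Type} (G : SimpleGraph V) (R : Set V) : Set V :=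
  {v : V | v ∈ R ∧ ∃ w, w ∉ R ∧ G.Adj v w}

/-- The graph `G + uv` obtained by adding the edge `uv`. -/
noncomputable def addEdge {α : Type} (G : SimpleGraph α) (u v : α) : SimpleGraph α :=
  G ⊔ SimpleGraph.fromEdgeSet {s(u, v)}

/-- `R` is an Ore-collapsible subset of `G`: a proper subset whose boundary consists of exactly
two non-adjacent vertices `u, v` such that `G[R] + uv` is 5-Ore. -/
def OreCollapsible {V : Type} (G : SimpleGraph V) (R : Set V) : Prop :=
  R ≠ Set.univ ∧ ∃ u v : ↥R, u.1 ≠ v.1 ∧ ¬ G.Adj u.1 v.1 ∧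
    boundary G R = {u.1, v.1} ∧ Is5Ore (addEdge (G.induce R) u v)

/-- An emerald: a subgraph isomorphic to `K₄` all of whose vertices have degree 4 in `G`,
given by its vertex set. -/
def IsEmerald {V : Type} (G : SimpleGraph V) (S : Set V) : Prop :=
  S.ncard = 4 ∧ (∀ a ∈ S, ∀ b ∈ S, a ≠ b → G.Adj a b) ∧ ∀ v ∈ S, degS G v = 4

/-- A diamond: a subgraph isomorphic to `K₅ - e` in which the vertices not incident to `e`
have degree 4 in `G`, given by its vertex set. -/
def IsDiamond {V : Type} (G : SimpleGraph V) (D : Set V) : Prop :=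
  D.ncard = 5 ∧ ∃ u ∈ D, ∃ v ∈ D, u ≠ v ∧
    (∀ a ∈ D, ∀ b ∈ D, a ≠ b → ¬(a = u ∧ b = v) → ¬(a = v ∧ b = u) → G.Adj a b) ∧
    ∀ w ∈ D, w ≠ u → w ≠ v → degS G w = 4

/-- A graph is ungemmed if it contains neither a diamond nor an emerald. -/
def Ungemmed {V : Type} (G : SimpleGraph V) : Prop :=
  (¬ ∃ D : Set V, IsDiamond G D) ∧ ¬ ∃ S : Set V, IsEmerald G S

/-- `R` is collapsible: a proper subset with `|R| ≥ 5` such that in every proper 4-coloring of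
`G[R]` all boundary vertices of `R` receive the same color. -/
def Collapsible {V : Type} (G : SimpleGraph V) (R : Set V) : Prop :=
  R ≠ Set.univ ∧ 5 ≤ R.ncard ∧
    ∀ φ : (G.induce R).Coloring (Fin 4), ∀ u v : ↥R,
      u.1 ∈ boundary G R → v.1 ∈ boundary G R → φ u = φ v

/-- The critical complement of a collapsible set `R`: identify the boundary of `R` to a single
new vertex (`none`) and delete the rest of `R`. -/
noncomputable def criticalComplement {V : Type} (G : SimpleGraph V) (R : Set V) :
    SimpleGraph (Option ↥(Rᶜ)) :=
  SimpleGraph.fromRel fun a b =>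
    match a, b with
    | some w, some w' => G.Adj w.1 w'.1
    | none, some w => ∃ x ∈ boundary G R, G.Adj x w.1
    | _, _ => False

/-- The φ-identification `G_φ(R)`: vertices outside `R` together with four vertices `x_i`;
the vertices of `R` colored `i` are identified to `x_i`, and all edges `x_i x_j` are added. -/
noncomputable def phiIdent {V : Type} (G : SimpleGraph V) (R : Set V) (φ : ↥R → Fin 4) :
    SimpleGraph ((↥(Rᶜ)) ⊕ Fin 4) :=
  SimpleGraph.fromRel fun a b =>
    match a, b with
    | Sum.inl w, Sum.inl w' => G.Adj w.1 w'.1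
    | Sum.inl w, Sum.inr i => ∃ r : ↥R, φ r = i ∧ G.Adj r.1 w.1
    | Sum.inr _, Sum.inr _ => True
    | _, _ => False

/-- A critical extension of `R` in `G`: a proper 4-coloring `φ` of `G[R]` together with a
5-critical subgraph `W` of the φ-identification `G_φ(R)`, with vertex set `S`. -/
structure CriticalExtension {V : Type} (G : SimpleGraph V) (R : Set V) where
  φ : (G.induce R).Coloring (Fin 4)
  S : Set ((↥(Rᶜ)) ⊕ Fin 4)
  W : SimpleGraph ↥S
  le : W ≤ (phiIdent G R ⇑φ).induce S
  crit : FiveCritical W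

/-- The critical extension `R' = (V(W) - V(X)) ∪ R` of `R`. -/
noncomputable def CriticalExtension.verts {V : Type} {G : SimpleGraph V} {R : Set V}
    (E : CriticalExtension G R) : Set V :=
  R ∪ {v : V | ∃ h : v ∈ Rᶜ, Sum.inl (⟨v, h⟩ : ↥(Rᶜ)) ∈ E.S}

/-- The size `|X|` of the core `W ∩ X` of the extension. -/
noncomputable def CriticalExtension.coreCard {V : Type} {G : SimpleGraph V} {R : Set V}
    (E : CriticalExtension G R) : ℕ :=
  {i : Fin 4 | Sum.inr i ∈ E.S}.ncard

/-- The graph `W - X` obtained from the extender `W` by deleting the core vertices. -/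
noncomputable def CriticalExtension.WminusX {V : Type} {G : SimpleGraph V} {R : Set V}
    (E : CriticalExtension G R) :=
  E.W.induce {w : ↥E.S | w.1.isLeft = true}

/-- `f(n) = (9+ε)n - 4·C(n,2)`. -/
noncomputable def fExt (n : ℕ) : ℝ := (9 + epsC) * (n : ℝ) - 4 * ((n.choose 2 : ℕ) : ℝ)

/-- The closed neighborhood of a vertex. -/
def closedNbhd {V : Type} (G : SimpleGraph V) (v : V) : Set V :=
  insert v (G.neighborSet v)

/-- A cluster: a maximal set of degree-four vertices with the same closed neighborhood. -/
def IsCluster {V : Type} (G : SimpleGraph V) (C : Set V) : Prop :=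
  C.Nonempty ∧ (∀ v ∈ C, degS G v = 4) ∧
  (∀ u ∈ C, ∀ v ∈ C, closedNbhd G u = closedNbhd G v) ∧
  ∀ C' : Set V, C ⊆ C' → (∀ v ∈ C', degS G v = 4) →
    (∀ u ∈ C', ∀ v ∈ C', closedNbhd G u = closedNbhd G v) → C' = C

open Classical in
/-- The list of cluster sizes of `G`, in decreasing order. -/
noncomputable def clusterList {V : Type} [Fintype V] (G : SimpleGraph V) : List ℕ :=
  ((((Finset.univ : Finset V).filter fun v => degS G v = 4).image
      fun v => (Finset.univ : Finset V).filter
        fun u => degS G u = 4 ∧ closedNbhd G u = closedNbhd G v).val.map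
    Finset.card).sort (· ≤ ·) |>.reverse

/-- `H` is smaller than `G`: fewer vertices; or the same number of vertices and more edges; or
the same number of vertices and edges and `H` precedes `G` in the lexicographic ordering of
cluster sizes listed in decreasing order. -/
def Smaller {V₁ V₂ : Type} [Fintype V₁] [Fintype V₂]
    (H : SimpleGraph V₁) (G : SimpleGraph V₂) : Prop :=
  Nat.card V₁ < Nat.card V₂ ∨
  (Nat.card V₁ = Nat.card V₂ ∧ G.edgeSet.ncard < H.edgeSet.ncard) ∨
  (Nat.card V₁ = Nat.card V₂ ∧ H.edgeSet.ncard = G.edgeSet.ncard ∧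
    List.Lex (· > ·) (clusterList H) (clusterList G))

/-- A 5-critical graph `G` is good if every smaller 5-critical graph satisfies the conclusion
of the main theorem. -/
def Good {V : Type} [Fintype V] (G : SimpleGraph V) : Prop :=
  FiveCritical G ∧
    ∀ (V' : Type) [Fintype V'] (H : SimpleGraph V'), FiveCritical H → Smaller H G →
      (IsK5 H → pot H = 5 + 5 * epsC - 2 * delC) ∧
      (Is5Ore H → ¬ IsK5 H →
        pot H ≤ 5 + (Nat.card V' : ℝ) * epsC - (2 + ((Nat.card V' : ℝ) - 1) / 4) * delC) ∧
      (¬ Is5Ore H → pot H ≤ 5 - PC)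

/-- `G` is tight if it is good and `p(G) ≥ 5 - P - Q`. -/
def Tight {V : Type} [Fintype V] (G : SimpleGraph V) : Prop :=
  Good G ∧ pot G ≥ 5 - PC - QC

/-- `u, v` is an identifiable pair in a proper subset `R`: `G[R] + uv` is not 4-colorable. -/
def IdentifiablePair {V : Type} (G : SimpleGraph V) (R : Set V) (u v : ↥R) : Prop :=
  R ≠ Set.univ ∧ ¬ (addEdge (G.induce R) u v).Colorable 4

section Comp

variable {V V₁ V₂ : Type}

structure CompData (G : SimpleGraph V) (G₁ : SimpleGraph V₁) (G₂ : SimpleGraph V₂) where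
  x : V₁
  y : V₁
  z : V₂
  f₁ : V₁ ↪ V
  f₂ : {w : V₂ // w ≠ z} ↪ V
  S : Set V₂
  hxy : G₁.Adj x y
  hS : ∀ w ∈ S, G₂.Adj z w
  hSne : S.Nonempty
  hTne : (G₂.neighborSet z \ S).Nonempty
  hdisj : Set.range ⇑f₁ ∩ Set.range ⇑f₂ = ∅
  huniv : Set.range ⇑f₁ ∪ Set.range ⇑f₂ = Set.univ
  hadj : ∀ a b : V, G.Adj a b ↔
      ((∃ a' b' : V₁, f₁ a' = a ∧ f₁ b' = b ∧ G₁.Adj a' b' ∧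
          ¬(a' = x ∧ b' = y) ∧ ¬(a' = y ∧ b' = x)) ∨
       (∃ a' b' : {w : V₂ // w ≠ z}, f₂ a' = a ∧ f₂ b' = b ∧ G₂.Adj a'.1 b'.1) ∨
       (∃ w : {w : V₂ // w ≠ z}, G₂.Adj z w.1 ∧
         ((((a = f₁ x ∧ b = f₂ w) ∨ (b = f₁ x ∧ a = f₂ w)) ∧ w.1 ∈ S) ∨
          (((a = f₁ y ∧ b = f₂ w) ∨ (b = f₁ y ∧ a = f₂ w)) ∧ w.1 ∉ S))))

theorem isOreComposition_nonempty {G : SimpleGraph V} {G₁ : SimpleGraph V₁} {G₂ : SimpleGraph V₂}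
    (h : IsOreComposition G G₁ G₂) : Nonempty (CompData G G₁ G₂) := by
  obtain ⟨x, y, z, f₁, f₂, S, h1, h2, h3, h4, h5, h6, h7⟩ := h
  exact ⟨⟨x, y, z, f₁, f₂, S, h1, h2, h3, h4, h5, h6, h7⟩⟩

namespace CompData

variable {G : SimpleGraph V} {G₁ : SimpleGraph V₁} {G₂ : SimpleGraph V₂}
  (d : CompData G G₁ G₂)

theorem f1_ne_f2 (a : V₁) (b : {w : V₂ // w ≠ d.z}) : d.f₁ a ≠ d.f₂ b := by
  intro h
  have : d.f₁ a ∈ Set.range ⇑d.f₁ ∩ Set.range ⇑d.f₂ := ⟨⟨a, rfl⟩, ⟨b, h.symm⟩⟩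
  rw [d.hdisj] at this
  exact this

theorem x_ne_y : d.x ≠ d.y := d.hxy.ne

theorem cover (v : V) : (∃ a, d.f₁ a = v) ∨ ∃ b, d.f₂ b = v := by
  have : v ∈ Set.range ⇑d.f₁ ∪ Set.range ⇑d.f₂ := by rw [d.huniv]; trivial
  exact this

theorem adj_f1f1 {a b : V₁} : G.Adj (d.f₁ a) (d.f₁ b) ↔
    (G₁.Adj a b ∧ ¬(a = d.x ∧ b = d.y) ∧ ¬(a = d.y ∧ b = d.x)) := by
  rw [d.hadj]
  constructor
  · rintro (⟨a', b', ha, hb, h⟩ | ⟨a', b', ha, hb, h⟩ | ⟨w, hw, h⟩)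
    · rw [d.f₁.injective ha, d.f₁.injective hb] at h; exact h
    · exact absurd hb.symm (d.f1_ne_f2 b b')
    · rcases h with ⟨(⟨h1, h2⟩ | ⟨h1, h2⟩), _⟩ | ⟨(⟨h1, h2⟩ | ⟨h1, h2⟩), _⟩ <;>
        exact absurd h2 (d.f1_ne_f2 _ _)
  · rintro ⟨h1, h2, h3⟩
    exact Or.inl ⟨a, b, rfl, rfl, h1, h2, h3⟩

theorem adj_f2f2 {a b : {w : V₂ // w ≠ d.z}} : G.Adj (d.f₂ a) (d.f₂ b) ↔ G₂.Adj a.1 b.1 := by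
  rw [d.hadj]
  constructor
  · rintro (⟨a', b', ha, hb, h⟩ | ⟨a', b', ha, hb, h⟩ | ⟨w, hw, h⟩)
    · exact absurd ha (d.f1_ne_f2 a' a)
    · rw [d.f₂.injective ha, d.f₂.injective hb] at h; exact h
    · rcases h with ⟨(⟨h1, h2⟩ | ⟨h1, h2⟩), _⟩ | ⟨(⟨h1, h2⟩ | ⟨h1, h2⟩), _⟩ <;>
        exact absurd h1.symm (d.f1_ne_f2 _ _)
  · intro h
    exact Or.inr (Or.inl ⟨a, b, rfl, rfl, h⟩)

theorem adj_f1x_f2 {w : {w : V₂ // w ≠ d.z}} : G.Adj (d.f₁ d.x) (d.f₂ w) ↔ w.1 ∈ d.S := by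
  rw [d.hadj]
  constructor
  · rintro (⟨a', b', ha, hb, h⟩ | ⟨a', b', ha, hb, h⟩ | ⟨w', hw', h⟩)
    · exact absurd hb (d.f1_ne_f2 b' w)
    · exact absurd ha.symm (d.f1_ne_f2 d.x a')
    · rcases h with ⟨(⟨h1, h2⟩ | ⟨h1, h2⟩), hmem⟩ | ⟨(⟨h1, h2⟩ | ⟨h1, h2⟩), hmem⟩
      · rw [d.f₂.injective h2]; exact hmem
      · exact absurd h1.symm (d.f1_ne_f2 _ _)
      · exact absurd (d.f₁.injective h1) d.x_ne_y
      · exact absurd h1.symm (d.f1_ne_f2 _ _)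
  · intro h
    exact Or.inr (Or.inr ⟨w, d.hS _ h, Or.inl ⟨Or.inl ⟨rfl, rfl⟩, h⟩⟩)

theorem adj_f1y_f2 {w : {w : V₂ // w ≠ d.z}} :
    G.Adj (d.f₁ d.y) (d.f₂ w) ↔ (G₂.Adj d.z w.1 ∧ w.1 ∉ d.S) := by
  rw [d.hadj]
  constructor
  · rintro (⟨a', b', ha, hb, h⟩ | ⟨a', b', ha, hb, h⟩ | ⟨w', hw', h⟩)
    · exact absurd hb (d.f1_ne_f2 b' w)
    · exact absurd ha.symm (d.f1_ne_f2 d.y a')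
    · rcases h with ⟨(⟨h1, h2⟩ | ⟨h1, h2⟩), hmem⟩ | ⟨(⟨h1, h2⟩ | ⟨h1, h2⟩), hmem⟩
      · exact absurd (d.f₁.injective h1).symm d.x_ne_y
      · exact absurd h1.symm (d.f1_ne_f2 _ _)
      · rw [d.f₂.injective h2]; exact ⟨hw', hmem⟩
      · exact absurd h1.symm (d.f1_ne_f2 _ _)
  · rintro ⟨h1, h2⟩
    exact Or.inr (Or.inr ⟨w, h1, Or.inr ⟨Or.inl ⟨rfl, rfl⟩, h2⟩⟩)

theorem adj_f1_f2_cases {a : V₁} {w : {w : V₂ // w ≠ d.z}} (h : G.Adj (d.f₁ a) (d.f₂ w)) :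
    (a = d.x ∧ w.1 ∈ d.S) ∨ (a = d.y ∧ G₂.Adj d.z w.1 ∧ w.1 ∉ d.S) := by
  rw [d.hadj] at h
  rcases h with ⟨a', b', ha, hb, h⟩ | ⟨a', b', ha, hb, h⟩ | ⟨w', hw', h⟩
  · exact absurd hb (d.f1_ne_f2 b' w)
  · exact absurd ha.symm (d.f1_ne_f2 a a')
  · rcases h with ⟨(⟨h1, h2⟩ | ⟨h1, h2⟩), hmem⟩ | ⟨(⟨h1, h2⟩ | ⟨h1, h2⟩), hmem⟩
    · exact Or.inl ⟨d.f₁.injective h1, by rw [d.f₂.injective h2]; exact hmem⟩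
    · exact absurd h1.symm (d.f1_ne_f2 _ _)
    · refine Or.inr ⟨d.f₁.injective h1, ?_, ?_⟩
      · rw [d.f₂.injective h2]; exact hw'
      · rw [d.f₂.injective h2]; exact hmem
    · exact absurd h1.symm (d.f1_ne_f2 _ _)

theorem not_adj_f1x_f1y : ¬ G.Adj (d.f₁ d.x) (d.f₁ d.y) := by
  rw [d.adj_f1f1]
  rintro ⟨h1, h2, h3⟩
  exact h2 ⟨rfl, rfl⟩

end CompData
end Comp
section Comp2

variable {V V₁ V₂ : Type} {G : SimpleGraph V} {G₁ : SimpleGraph V₁} {G₂ : SimpleGraph V₂}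

namespace CompData

variable (d : CompData G G₁ G₂)
include d

noncomputable def vEquiv : V₁ ⊕ {w : V₂ // w ≠ d.z} ≃ V :=
  Equiv.ofBijective (Sum.elim ⇑d.f₁ ⇑d.f₂) (by
    constructor
    · rintro (a | a) (b | b) h <;> simp only [Sum.elim_inl, Sum.elim_inr] at h
      · rw [d.f₁.injective h]
      · exact absurd h (d.f1_ne_f2 a b)
      · exact absurd h.symm (d.f1_ne_f2 b a)
      · rw [d.f₂.injective h]
    · intro v
      rcases d.cover v with ⟨a, ha⟩ | ⟨b, hb⟩
      exacts [⟨Sum.inl a, ha⟩, ⟨Sum.inr b, hb⟩])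

theorem finite_V [Finite V₁] [Finite V₂] : Finite V := Finite.of_equiv _ d.vEquiv

theorem card_V [Finite V₁] [Finite V₂] : Nat.card V + 1 = Nat.card V₁ + Nat.card V₂ := by
  classical
  have h1 : Nat.card V = Nat.card V₁ + Nat.card {w : V₂ // w ≠ d.z} := by
    rw [← Nat.card_congr d.vEquiv, Nat.card_sum]
  have h2 := Nat.card_congr (Equiv.sumCompl (· ≠ d.z))
  rw [Nat.card_sum] at h2
  have h3 : Nat.card {a : V₂ // ¬ a ≠ d.z} = 1 := by
    rw [Nat.card_eq_one_iff_unique]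
    refine ⟨⟨fun a b => ?_⟩, ⟨⟨d.z, by simp⟩⟩⟩
    obtain ⟨a, ha⟩ := a; obtain ⟨b, hb⟩ := b
    simp only [ne_eq, not_not] at ha hb
    subst ha; subst hb; rfl
  omega

theorem not_colorable (h₁ : ¬ G₁.Colorable 4) (h₂ : ¬ G₂.Colorable 4) : ¬ G.Colorable 4 := by
  classical
  rintro ⟨φ⟩
  by_cases hc : φ (d.f₁ d.x) = φ (d.f₁ d.y)
  · refine h₂ ⟨Coloring.mk
      (fun v => if h : v = d.z then φ (d.f₁ d.x) else φ (d.f₂ ⟨v, h⟩)) ?_⟩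
    intro a b hab
    by_cases ha : a = d.z <;> by_cases hb : b = d.z
    · subst ha; exact absurd (hb ▸ hab) G₂.irrefl
    · subst ha
      simp only [dif_pos rfl, dif_neg hb]
      by_cases hbS : b ∈ d.S
      · exact φ.valid ((d.adj_f1x_f2 (w := ⟨b, hb⟩)).mpr hbS)
      · rw [hc]; exact φ.valid ((d.adj_f1y_f2 (w := ⟨b, hb⟩)).mpr ⟨hab, hbS⟩)
    · subst hb
      simp only [dif_pos rfl, dif_neg ha]
      by_cases haS : a ∈ d.S
      · exact (φ.valid ((d.adj_f1x_f2 (w := ⟨a, ha⟩)).mpr haS)).symm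
      · rw [hc]; exact (φ.valid ((d.adj_f1y_f2 (w := ⟨a, ha⟩)).mpr ⟨hab.symm, haS⟩)).symm
    · simp only [dif_neg ha, dif_neg hb]
      exact φ.valid ((d.adj_f2f2 (a := ⟨a, ha⟩) (b := ⟨b, hb⟩)).mpr hab)
  · refine h₁ ⟨Coloring.mk (fun a => φ (d.f₁ a)) ?_⟩
    intro a b hab
    by_cases hxy1 : a = d.x ∧ b = d.y
    · rw [hxy1.1, hxy1.2]; exact hc
    by_cases hxy2 : a = d.y ∧ b = d.x
    · rw [hxy2.1, hxy2.2]; exact fun h => hc h.symm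
    exact φ.valid (d.adj_f1f1.mpr ⟨hab, hxy1, hxy2⟩)

end CompData

end Comp2
section Counting

variable {α : Type}

/-- Count of edges of `G` inside `R`, as edges of the ambient `Sym2 α`. -/
noncomputable def eCount (G : SimpleGraph α) (R : Set α) : ℕ :=
  {e : Sym2 α | e ∈ G.edgeSet ∧ ∀ v ∈ e, v ∈ R}.ncard

theorem induce_adj' {G : SimpleGraph α} {R : Set α} {a b : ↥R} :
    (G.induce R).Adj a b ↔ G.Adj a.1 b.1 := Iff.rfl

theorem edgeSet_induce_ncard (G : SimpleGraph α) (R : Set α) :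
    (G.induce R).edgeSet.ncard = eCount G R := by
  rw [eCount, ← Nat.card_coe_set_eq, ← Nat.card_coe_set_eq]
  apply Nat.card_congr
  refine Equiv.ofBijective (fun e => ⟨Sym2.map Subtype.val e.1, ?_⟩) ⟨?_, ?_⟩
  · obtain ⟨e, he⟩ := e
    refine e.ind (fun a b hab => ?_) he
    simp only [Sym2.map_pair_eq, Set.mem_setOf_eq, SimpleGraph.mem_edgeSet, Sym2.mem_iff]
    rw [SimpleGraph.mem_edgeSet] at hab
    exact ⟨hab, by rintro v (rfl | rfl); exacts [a.2, b.2]⟩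
  · rintro ⟨e, he⟩ ⟨e', he'⟩ h
    simp only [Subtype.mk.injEq] at h ⊢
    exact Sym2.map.injective Subtype.val_injective h
  · rintro ⟨e, he, hR⟩
    revert he hR
    refine e.ind (fun a b => ?_)
    intro hab hR
    rw [SimpleGraph.mem_edgeSet] at hab
    have ha : a ∈ R := hR a (by simp)
    have hb : b ∈ R := hR b (by simp)
    exact ⟨⟨s(⟨a, ha⟩, ⟨b, hb⟩), by rwa [SimpleGraph.mem_edgeSet, induce_adj']⟩, by
      simp [Sym2.map_pair_eq]⟩

theorem potKYOn_eq (G : SimpleGraph α) (R : Set α) :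
    potKYOn G R = 9 * (R.ncard : ℝ) - 4 * (eCount G R : ℝ) := by
  rw [potKYOn, potKY, edgeSet_induce_ncard, Nat.card_coe_set_eq]

/-- The number of edges between `P` and `Q`. -/
noncomputable def crossCount (G : SimpleGraph α) (P Q : Set α) : ℕ :=
  {e : Sym2 α | ∃ p ∈ P, ∃ q ∈ Q, G.Adj p q ∧ e = s(p, q)}.ncard

theorem eCount_union [Finite α] (G : SimpleGraph α) {P Q : Set α} (h : Disjoint P Q) :
    eCount G (P ∪ Q) = eCount G P + eCount G Q + crossCount G P Q := by
  classical
  have hsplit : {e : Sym2 α | e ∈ G.edgeSet ∧ ∀ v ∈ e, v ∈ P ∪ Q} =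
      ({e : Sym2 α | e ∈ G.edgeSet ∧ ∀ v ∈ e, v ∈ P} ∪
        {e : Sym2 α | e ∈ G.edgeSet ∧ ∀ v ∈ e, v ∈ Q}) ∪
      {e : Sym2 α | ∃ p ∈ P, ∃ q ∈ Q, G.Adj p q ∧ e = s(p, q)} := by
    ext e
    refine e.ind (fun a b => ?_)
    simp only [Set.mem_setOf_eq, Set.mem_union, SimpleGraph.mem_edgeSet, Sym2.mem_iff]
    constructor
    · rintro ⟨hab, hv⟩
      have ha := hv a (Or.inl rfl)
      have hb := hv b (Or.inr rfl)
      rcases ha with ha | ha <;> rcases hb with hb | hb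
      · exact Or.inl (Or.inl ⟨hab, by rintro v (rfl | rfl) <;> assumption⟩)
      · exact Or.inr ⟨a, ha, b, hb, hab, rfl⟩
      · exact Or.inr ⟨b, hb, a, ha, hab.symm, Sym2.eq_swap⟩
      · exact Or.inl (Or.inr ⟨hab, by rintro v (rfl | rfl) <;> assumption⟩)
    · rintro ((⟨hab, hv⟩ | ⟨hab, hv⟩) | ⟨p, hp, q, hq, hpq, he⟩)
      · exact ⟨hab, fun v hv' => Or.inl (hv v hv')⟩
      · exact ⟨hab, fun v hv' => Or.inr (hv v hv')⟩
      · rw [Sym2.eq_iff] at he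
        rcases he with ⟨rfl, rfl⟩ | ⟨rfl, rfl⟩
        · exact ⟨hpq, by rintro v (rfl | rfl); exacts [Or.inl hp, Or.inr hq]⟩
        · exact ⟨hpq.symm, by rintro v (rfl | rfl); exacts [Or.inr hq, Or.inl hp]⟩
  have hd1 : Disjoint {e : Sym2 α | e ∈ G.edgeSet ∧ ∀ v ∈ e, v ∈ P}
      {e : Sym2 α | e ∈ G.edgeSet ∧ ∀ v ∈ e, v ∈ Q} := by
    rw [Set.disjoint_left]
    intro e
    refine e.ind (fun a b => ?_)
    rintro ⟨hab, hv⟩ ⟨_, hv'⟩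
    exact Set.disjoint_left.mp h (hv a (by simp)) (hv' a (by simp))
  have hd2 : Disjoint ({e : Sym2 α | e ∈ G.edgeSet ∧ ∀ v ∈ e, v ∈ P} ∪
        {e : Sym2 α | e ∈ G.edgeSet ∧ ∀ v ∈ e, v ∈ Q})
      {e : Sym2 α | ∃ p ∈ P, ∃ q ∈ Q, G.Adj p q ∧ e = s(p, q)} := by
    rw [Set.disjoint_left]
    rintro e (⟨hab, hv⟩ | ⟨hab, hv⟩) ⟨p, hp, q, hq, hpq, rfl⟩
    · exact Set.disjoint_left.mp h (hv q (by simp)) hq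
    · exact Set.disjoint_left.mp h hp (hv p (by simp))
  rw [eCount, hsplit, Set.ncard_union_eq hd2 (Set.toFinite _) (Set.toFinite _),
    Set.ncard_union_eq hd1 (Set.toFinite _) (Set.toFinite _)]
  rfl

theorem crossCount_empty [Finite α] (G : SimpleGraph α) {P Q : Set α}
    (h : ∀ p ∈ P, ∀ q ∈ Q, ¬ G.Adj p q) : crossCount G P Q = 0 := by
  rw [crossCount, Set.ncard_eq_zero (Set.toFinite _)]
  ext e
  simp only [Set.mem_setOf_eq, Set.mem_empty_iff_false, iff_false]
  rintro ⟨p, hp, q, hq, hpq, rfl⟩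
  exact h p hp q hq hpq

theorem crossCount_congr (G : SimpleGraph α) {P P' Q : Set α} (hsub : P' ⊆ P)
    (h : ∀ p ∈ P, ∀ q ∈ Q, G.Adj p q → p ∈ P') :
    crossCount G P Q = crossCount G P' Q := by
  rw [crossCount, crossCount]
  congr 1
  ext e
  simp only [Set.mem_setOf_eq]
  constructor
  · rintro ⟨p, hp, q, hq, hpq, rfl⟩
    exact ⟨p, h p hp q hq hpq, q, hq, hpq, rfl⟩
  · rintro ⟨p, hp, q, hq, hpq, rfl⟩
    exact ⟨p, hsub hp, q, hq, hpq, rfl⟩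

theorem crossCount_singleton [Finite α] (G : SimpleGraph α) {Q : Set α} {u : α} (hu : u ∉ Q) :
    crossCount G {u} Q = (G.neighborSet u ∩ Q).ncard := by
  rw [crossCount]
  have heq : {e : Sym2 α | ∃ p ∈ ({u} : Set α), ∃ q ∈ Q, G.Adj p q ∧ e = s(p, q)} =
      (fun q => s(u, q)) '' (G.neighborSet u ∩ Q) := by
    ext e
    simp only [Set.mem_setOf_eq, Set.mem_image, Set.mem_inter_iff, SimpleGraph.mem_neighborSet,
      Set.mem_singleton_iff]
    constructor
    · rintro ⟨p, rfl, q, hq, hpq, rfl⟩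
      exact ⟨q, ⟨hpq, hq⟩, rfl⟩
    · rintro ⟨q, ⟨huq, hq⟩, rfl⟩
      exact ⟨u, rfl, q, hq, huq, rfl⟩
  rw [heq]
  apply Set.ncard_image_of_injOn
  rintro q ⟨hq1, hq2⟩ q' ⟨hq1', hq2'⟩ hee
  rw [Sym2.eq_iff] at hee
  rcases hee with ⟨-, h2⟩ | ⟨h1, h2⟩
  · exact h2
  · exact absurd h1.symm (fun hh => hu (hh ▸ hq2'))

theorem crossCount_union_left [Finite α] (G : SimpleGraph α) {P₁ P₂ Q : Set α}
    (h12 : Disjoint P₁ P₂) (hQ : Disjoint (P₁ ∪ P₂) Q) :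
    crossCount G (P₁ ∪ P₂) Q = crossCount G P₁ Q + crossCount G P₂ Q := by
  rw [crossCount, crossCount, crossCount]
  have heq : {e : Sym2 α | ∃ p ∈ P₁ ∪ P₂, ∃ q ∈ Q, G.Adj p q ∧ e = s(p, q)} =
      {e : Sym2 α | ∃ p ∈ P₁, ∃ q ∈ Q, G.Adj p q ∧ e = s(p, q)} ∪
      {e : Sym2 α | ∃ p ∈ P₂, ∃ q ∈ Q, G.Adj p q ∧ e = s(p, q)} := by
    ext e
    simp only [Set.mem_setOf_eq, Set.mem_union]
    constructor
    · rintro ⟨p, hp | hp, q, hq, hpq, rfl⟩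
      · exact Or.inl ⟨p, hp, q, hq, hpq, rfl⟩
      · exact Or.inr ⟨p, hp, q, hq, hpq, rfl⟩
    · rintro (⟨p, hp, q, hq, hpq, rfl⟩ | ⟨p, hp, q, hq, hpq, rfl⟩)
      · exact ⟨p, Or.inl hp, q, hq, hpq, rfl⟩
      · exact ⟨p, Or.inr hp, q, hq, hpq, rfl⟩
  rw [heq]
  apply Set.ncard_union_eq _ (Set.toFinite _) (Set.toFinite _)
  rw [Set.disjoint_left]
  rintro e ⟨p, hp, q, hq, hpq, rfl⟩ ⟨p', hp', q', hq', hpq', hee⟩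
  rw [Sym2.eq_iff] at hee
  rcases hee with ⟨h1, h2⟩ | ⟨h1, h2⟩
  · exact Set.disjoint_left.mp h12 hp (h1 ▸ hp')
  · exact Set.disjoint_left.mp hQ (Set.mem_union_left _ hp) (h1 ▸ hq')

end Counting
section Comp3

variable {V V₁ V₂ : Type} {G : SimpleGraph V} {G₁ : SimpleGraph V₁} {G₂ : SimpleGraph V₂}

namespace CompData

variable (d : CompData G G₁ G₂)

/-- The part of `R` on the `G₁` side. -/
def R1 (R : Set V) : Set V₁ := ⇑d.f₁ ⁻¹' R

/-- The part of `R` on the `G₂` side, as a subset of the split vertices. -/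
def R2 (R : Set V) : Set {w : V₂ // w ≠ d.z} := ⇑d.f₂ ⁻¹' R

/-- The part of `R` on the `G₂` side, as a subset of `V₂`. -/
def R2' (R : Set V) : Set V₂ := Subtype.val '' d.R2 R

theorem R_eq (R : Set V) : R = ⇑d.f₁ '' d.R1 R ∪ ⇑d.f₂ '' d.R2 R := by
  ext v
  constructor
  · intro hv
    rcases d.cover v with ⟨a, rfl⟩ | ⟨b, rfl⟩
    · exact Or.inl ⟨a, hv, rfl⟩
    · exact Or.inr ⟨b, hv, rfl⟩
  · rintro (⟨a, ha, rfl⟩ | ⟨b, hb, rfl⟩)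
    exacts [ha, hb]

theorem images_disjoint (A : Set V₁) (B : Set {w : V₂ // w ≠ d.z}) :
    Disjoint (⇑d.f₁ '' A) (⇑d.f₂ '' B) := by
  rw [Set.disjoint_left]
  rintro v ⟨a, ha, rfl⟩ ⟨b, hb, hba⟩
  exact d.f1_ne_f2 a b hba.symm

theorem z_not_mem_R2' (R : Set V) : d.z ∉ d.R2' R := by
  rintro ⟨⟨w, hw⟩, _, rfl⟩
  exact hw rfl

theorem ncard_R2' (R : Set V) : (d.R2' R).ncard = (d.R2 R).ncard :=
  Set.ncard_image_of_injective _ Subtype.val_injective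

theorem ncard_R (R : Set V) [Finite V] : R.ncard = (d.R1 R).ncard + (d.R2 R).ncard := by
  nth_rewrite 1 [d.R_eq R]
  rw [Set.ncard_union_eq (d.images_disjoint _ _) (Set.toFinite _) (Set.toFinite _),
    Set.ncard_image_of_injective _ d.f₁.injective, Set.ncard_image_of_injective _ d.f₂.injective]

theorem edges_f1 (A : Set V₁) :
    {e : Sym2 V | e ∈ G.edgeSet ∧ ∀ v ∈ e, v ∈ ⇑d.f₁ '' A} =
      Sym2.map ⇑d.f₁ ''
        {e : Sym2 V₁ | e ∈ G₁.edgeSet ∧ (∀ v ∈ e, v ∈ A) ∧ e ≠ s(d.x, d.y)} := by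
  refine Set.Subset.antisymm ?_ ?_
  · intro e
    refine e.ind (fun a b => ?_)
    rintro ⟨hab, hv⟩
    rw [SimpleGraph.mem_edgeSet] at hab
    have hva := hv a (Sym2.mem_mk_left a b)
    have hvb := hv b (Sym2.mem_mk_right a b)
    obtain ⟨a', ha', rfl⟩ := hva
    obtain ⟨b', hb', hb'e⟩ := hvb
    subst hb'e
    rw [d.adj_f1f1] at hab
    obtain ⟨hadj, hn1, hn2⟩ := hab
    refine ⟨s(a', b'), ⟨G₁.mem_edgeSet.mpr hadj, ?_, ?_⟩, by rw [Sym2.map_pair_eq]⟩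
    · intro v hv'
      rw [Sym2.mem_iff] at hv'
      rcases hv' with rfl | rfl <;> assumption
    · rw [Ne, Sym2.eq_iff]
      rintro (⟨rfl, rfl⟩ | ⟨rfl, rfl⟩)
      exacts [hn1 ⟨rfl, rfl⟩, hn2 ⟨rfl, rfl⟩]
  · rintro e ⟨e', hmem, rfl⟩
    revert hmem
    refine e'.ind (fun a' b' => ?_)
    rintro ⟨he', hv', hne⟩
    rw [SimpleGraph.mem_edgeSet] at he'
    rw [Ne, Sym2.eq_iff] at hne
    rw [Sym2.map_pair_eq]
    constructor
    · rw [SimpleGraph.mem_edgeSet, d.adj_f1f1]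
      refine ⟨he', ?_, ?_⟩
      · rintro ⟨rfl, rfl⟩; exact hne (Or.inl ⟨rfl, rfl⟩)
      · rintro ⟨rfl, rfl⟩; exact hne (Or.inr ⟨rfl, rfl⟩)
    · intro v hv
      rw [Sym2.mem_iff] at hv
      rcases hv with rfl | rfl
      exacts [⟨a', hv' a' (Sym2.mem_mk_left a' b'), rfl⟩,
        ⟨b', hv' b' (Sym2.mem_mk_right a' b'), rfl⟩]

theorem eCount_f1_not [Finite V] [Finite V₁] {A : Set V₁} (hxy : ¬(d.x ∈ A ∧ d.y ∈ A)) :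
    eCount G (⇑d.f₁ '' A) = eCount G₁ A := by
  rw [eCount, eCount, d.edges_f1 A,
    Set.ncard_image_of_injective _ (Sym2.map.injective d.f₁.injective)]
  congr 1
  ext e
  simp only [Set.mem_setOf_eq]
  constructor
  · rintro ⟨he, hv, -⟩; exact ⟨he, hv⟩
  · rintro ⟨he, hv⟩
    refine ⟨he, hv, ?_⟩
    rintro rfl
    exact hxy ⟨hv d.x (Sym2.mem_mk_left _ _), hv d.y (Sym2.mem_mk_right _ _)⟩

theorem eCount_f1_both [Finite V] [Finite V₁] {A : Set V₁} (hx : d.x ∈ A) (hy : d.y ∈ A) :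
    eCount G (⇑d.f₁ '' A) + 1 = eCount G₁ A := by
  rw [eCount, eCount, d.edges_f1 A,
    Set.ncard_image_of_injective _ (Sym2.map.injective d.f₁.injective)]
  have h3 : {e : Sym2 V₁ | e ∈ G₁.edgeSet ∧ ∀ v ∈ e, v ∈ A} =
      insert s(d.x, d.y) {e : Sym2 V₁ | e ∈ G₁.edgeSet ∧ (∀ v ∈ e, v ∈ A) ∧ e ≠ s(d.x, d.y)} := by
    ext e
    simp only [Set.mem_setOf_eq, Set.mem_insert_iff]
    constructor
    · intro ⟨he, hv⟩
      by_cases he' : e = s(d.x, d.y)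
      · exact Or.inl he'
      · exact Or.inr ⟨he, hv, he'⟩
    · rintro (rfl | ⟨he, hv, -⟩)
      · refine ⟨G₁.mem_edgeSet.mpr d.hxy, ?_⟩
        intro v hv
        rw [Sym2.mem_iff] at hv
        rcases hv with rfl | rfl
        exacts [hx, hy]
      · exact ⟨he, hv⟩
  rw [h3, Set.ncard_insert_of_notMem (fun h => h.2.2 rfl) (Set.toFinite _)]

theorem eCount_f2 [Finite V] [Finite V₂] (B : Set {w : V₂ // w ≠ d.z}) :
    eCount G (⇑d.f₂ '' B) = eCount G₂ (Subtype.val '' B) := by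
  classical
  set D : Set (Sym2 {w : V₂ // w ≠ d.z}) :=
    {e | ∃ a b : {w : V₂ // w ≠ d.z}, e = s(a, b) ∧ G₂.Adj a.1 b.1 ∧ a ∈ B ∧ b ∈ B} with hD
  have h1 : {e : Sym2 V | e ∈ G.edgeSet ∧ ∀ v ∈ e, v ∈ ⇑d.f₂ '' B} = Sym2.map ⇑d.f₂ '' D := by
    refine Set.Subset.antisymm ?_ ?_
    · intro e
      refine e.ind (fun a b => ?_)
      rintro ⟨hab, hv⟩
      rw [SimpleGraph.mem_edgeSet] at hab
      have hva := hv a (Sym2.mem_mk_left a b)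
      have hvb := hv b (Sym2.mem_mk_right a b)
      obtain ⟨a', ha', rfl⟩ := hva
      obtain ⟨b', hb', hb'e⟩ := hvb
      subst hb'e
      rw [d.adj_f2f2] at hab
      exact ⟨s(a', b'), ⟨a', b', rfl, hab, ha', hb'⟩, by rw [Sym2.map_pair_eq]⟩
    · rintro e ⟨e', ⟨a', b', rfl, hab, ha', hb'⟩, rfl⟩
      rw [Sym2.map_pair_eq]
      constructor
      · rw [SimpleGraph.mem_edgeSet, d.adj_f2f2]; exact hab
      · intro v hv
        rw [Sym2.mem_iff] at hv
        rcases hv with rfl | rfl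
        exacts [⟨a', ha', rfl⟩, ⟨b', hb', rfl⟩]
  have h2 : {e : Sym2 V₂ | e ∈ G₂.edgeSet ∧ ∀ v ∈ e, v ∈ Subtype.val '' B} =
      Sym2.map (Subtype.val : {w : V₂ // w ≠ d.z} → V₂) '' D := by
    refine Set.Subset.antisymm ?_ ?_
    · intro e
      refine e.ind (fun a b => ?_)
      rintro ⟨hab, hv⟩
      rw [SimpleGraph.mem_edgeSet] at hab
      have hva := hv a (Sym2.mem_mk_left a b)
      have hvb := hv b (Sym2.mem_mk_right a b)
      obtain ⟨a', ha', rfl⟩ := hva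
      obtain ⟨b', hb', hb'e⟩ := hvb
      subst hb'e
      exact ⟨s(a', b'), ⟨a', b', rfl, hab, ha', hb'⟩, by rw [Sym2.map_pair_eq]⟩
    · rintro e ⟨e', ⟨a', b', rfl, hab, ha', hb'⟩, rfl⟩
      rw [Sym2.map_pair_eq]
      refine ⟨G₂.mem_edgeSet.mpr hab, ?_⟩
      intro v hv
      rw [Sym2.mem_iff] at hv
      rcases hv with rfl | rfl
      exacts [⟨a', ha', rfl⟩, ⟨b', hb', rfl⟩]
  rw [eCount, eCount, h1, h2,
    Set.ncard_image_of_injective _ (Sym2.map.injective d.f₂.injective),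
    Set.ncard_image_of_injective _ (Sym2.map.injective Subtype.val_injective)]

end CompData

end Comp3
section Counting2

variable {α : Type}

theorem eCount_singleton [Finite α] (G : SimpleGraph α) (v : α) : eCount G {v} = 0 := by
  rw [eCount, Set.ncard_eq_zero (Set.toFinite _)]
  ext e
  refine e.ind (fun a b => ?_)
  simp only [Set.mem_setOf_eq, Set.mem_empty_iff_false, iff_false, not_and,
    SimpleGraph.mem_edgeSet, Set.mem_singleton_iff]
  intro hab hv
  have ha := hv a (Sym2.mem_mk_left a b)
  have hb := hv b (Sym2.mem_mk_right a b)
  exact G.irrefl (ha ▸ hb ▸ hab)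

theorem eCount_insert [Finite α] (G : SimpleGraph α) {Q : Set α} {v : α} (hv : v ∉ Q) :
    eCount G (insert v Q) = eCount G Q + (G.neighborSet v ∩ Q).ncard := by
  rw [Set.insert_eq, eCount_union G (Set.disjoint_singleton_left.mpr hv), eCount_singleton,
    crossCount_singleton G hv]
  omega

end Counting2

section Comp4

variable {V V₁ V₂ : Type} {G : SimpleGraph V} {G₁ : SimpleGraph V₁} {G₂ : SimpleGraph V₂}

namespace CompData

variable (d : CompData G G₁ G₂)

theorem nbhd_f1x (B : Set {w : V₂ // w ≠ d.z}) :
    G.neighborSet (d.f₁ d.x) ∩ (⇑d.f₂ '' B) = ⇑d.f₂ '' {w ∈ B | w.1 ∈ d.S} := by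
  ext v
  simp only [Set.mem_inter_iff, SimpleGraph.mem_neighborSet, Set.mem_image, Set.mem_setOf_eq]
  constructor
  · rintro ⟨hadj, w, hw, rfl⟩
    exact ⟨w, ⟨hw, d.adj_f1x_f2.mp hadj⟩, rfl⟩
  · rintro ⟨w, ⟨hw, hwS⟩, rfl⟩
    exact ⟨d.adj_f1x_f2.mpr hwS, w, hw, rfl⟩

theorem nbhd_f1y (B : Set {w : V₂ // w ≠ d.z}) :
    G.neighborSet (d.f₁ d.y) ∩ (⇑d.f₂ '' B) =
      ⇑d.f₂ '' {w ∈ B | G₂.Adj d.z w.1 ∧ w.1 ∉ d.S} := by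
  ext v
  simp only [Set.mem_inter_iff, SimpleGraph.mem_neighborSet, Set.mem_image, Set.mem_setOf_eq]
  constructor
  · rintro ⟨hadj, w, hw, rfl⟩
    exact ⟨w, ⟨hw, d.adj_f1y_f2.mp hadj⟩, rfl⟩
  · rintro ⟨w, ⟨hw, hwT⟩, rfl⟩
    exact ⟨d.adj_f1y_f2.mpr hwT, w, hw, rfl⟩

theorem nbhd_z (B : Set {w : V₂ // w ≠ d.z}) :
    G₂.neighborSet d.z ∩ (Subtype.val '' B) =
      Subtype.val '' ({w ∈ B | w.1 ∈ d.S} ∪ {w ∈ B | G₂.Adj d.z w.1 ∧ w.1 ∉ d.S}) := by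
  ext v
  simp only [Set.mem_inter_iff, SimpleGraph.mem_neighborSet, Set.mem_image, Set.mem_union,
    Set.mem_setOf_eq]
  constructor
  · rintro ⟨hadj, w, hw, rfl⟩
    by_cases hS : w.1 ∈ d.S
    · exact ⟨w, Or.inl ⟨hw, hS⟩, rfl⟩
    · exact ⟨w, Or.inr ⟨hw, hadj, hS⟩, rfl⟩
  · rintro ⟨w, (⟨hw, hS⟩ | ⟨hw, hadj, -⟩), rfl⟩
    · exact ⟨d.hS _ hS, w, hw, rfl⟩
    · exact ⟨hadj, w, hw, rfl⟩

theorem ncard_nbhd_z [Finite V₂] (B : Set {w : V₂ // w ≠ d.z}) :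
    (G₂.neighborSet d.z ∩ (Subtype.val '' B)).ncard =
      {w ∈ B | w.1 ∈ d.S}.ncard + {w ∈ B | G₂.Adj d.z w.1 ∧ w.1 ∉ d.S}.ncard := by
  rw [d.nbhd_z B, Set.ncard_image_of_injective _ Subtype.val_injective]
  apply Set.ncard_union_eq _ (Set.toFinite _) (Set.toFinite _)
  rw [Set.disjoint_left]
  rintro w ⟨-, hS⟩ ⟨-, -, hS'⟩
  exact hS' hS

theorem crossCount_none [Finite V] {A : Set V₁} (B : Set {w : V₂ // w ≠ d.z})
    (hx : d.x ∉ A) (hy : d.y ∉ A) :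
    crossCount G (⇑d.f₁ '' A) (⇑d.f₂ '' B) = 0 := by
  apply crossCount_empty
  rintro p ⟨a, ha, rfl⟩ q ⟨w, hw, rfl⟩ hadj
  rcases d.adj_f1_f2_cases hadj with ⟨rfl, -⟩ | ⟨rfl, -⟩
  exacts [hx ha, hy ha]

theorem crossCount_x [Finite V] {A : Set V₁} (B : Set {w : V₂ // w ≠ d.z})
    (hx : d.x ∈ A) (hy : d.y ∉ A) :
    crossCount G (⇑d.f₁ '' A) (⇑d.f₂ '' B) = {w ∈ B | w.1 ∈ d.S}.ncard := by
  have h1 : ∀ p ∈ ⇑d.f₁ '' A, ∀ q ∈ ⇑d.f₂ '' B, G.Adj p q → p ∈ ({d.f₁ d.x} : Set V) := by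
    rintro p ⟨a, ha, rfl⟩ q ⟨w, hw, rfl⟩ hadj
    rcases d.adj_f1_f2_cases hadj with ⟨rfl, -⟩ | ⟨rfl, -⟩
    · rfl
    · exact absurd ha hy
  have h2 : d.f₁ d.x ∉ ⇑d.f₂ '' B := by
    rintro ⟨w, -, hw⟩
    exact d.f1_ne_f2 d.x w hw.symm
  have hmx : ({d.f₁ d.x} : Set V) ⊆ ⇑d.f₁ '' A := Set.singleton_subset_iff.mpr ⟨d.x, hx, rfl⟩
  rw [crossCount_congr G hmx h1,
    crossCount_singleton G h2, d.nbhd_f1x B,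
    Set.ncard_image_of_injective _ d.f₂.injective]

theorem crossCount_y [Finite V] {A : Set V₁} (B : Set {w : V₂ // w ≠ d.z})
    (hx : d.x ∉ A) (hy : d.y ∈ A) :
    crossCount G (⇑d.f₁ '' A) (⇑d.f₂ '' B) =
      {w ∈ B | G₂.Adj d.z w.1 ∧ w.1 ∉ d.S}.ncard := by
  have h1 : ∀ p ∈ ⇑d.f₁ '' A, ∀ q ∈ ⇑d.f₂ '' B, G.Adj p q → p ∈ ({d.f₁ d.y} : Set V) := by
    rintro p ⟨a, ha, rfl⟩ q ⟨w, hw, rfl⟩ hadj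
    rcases d.adj_f1_f2_cases hadj with ⟨rfl, -⟩ | ⟨rfl, -⟩
    · exact absurd ha hx
    · rfl
  have h2 : d.f₁ d.y ∉ ⇑d.f₂ '' B := by
    rintro ⟨w, -, hw⟩
    exact d.f1_ne_f2 d.y w hw.symm
  have hmy : ({d.f₁ d.y} : Set V) ⊆ ⇑d.f₁ '' A := Set.singleton_subset_iff.mpr ⟨d.y, hy, rfl⟩
  rw [crossCount_congr G hmy h1,
    crossCount_singleton G h2, d.nbhd_f1y B,
    Set.ncard_image_of_injective _ d.f₂.injective]

theorem crossCount_both [Finite V] {A : Set V₁} (B : Set {w : V₂ // w ≠ d.z})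
    (hx : d.x ∈ A) (hy : d.y ∈ A) :
    crossCount G (⇑d.f₁ '' A) (⇑d.f₂ '' B) =
      {w ∈ B | w.1 ∈ d.S}.ncard + {w ∈ B | G₂.Adj d.z w.1 ∧ w.1 ∉ d.S}.ncard := by
  have hxyne : d.f₁ d.x ≠ d.f₁ d.y := fun h => d.x_ne_y (d.f₁.injective h)
  have hsub : ({d.f₁ d.x, d.f₁ d.y} : Set V) ⊆ ⇑d.f₁ '' A := by
    rintro v (rfl | rfl)
    exacts [⟨d.x, hx, rfl⟩, ⟨d.y, hy, rfl⟩]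
  have h1 : ∀ p ∈ ⇑d.f₁ '' A, ∀ q ∈ ⇑d.f₂ '' B, G.Adj p q →
      p ∈ ({d.f₁ d.x, d.f₁ d.y} : Set V) := by
    rintro p ⟨a, ha, rfl⟩ q ⟨w, hw, rfl⟩ hadj
    rcases d.adj_f1_f2_cases hadj with ⟨rfl, -⟩ | ⟨rfl, -⟩
    · exact Or.inl rfl
    · exact Or.inr rfl
  have h2 : d.f₁ d.x ∉ ⇑d.f₂ '' B := by
    rintro ⟨w, -, hw⟩
    exact d.f1_ne_f2 d.x w hw.symm
  have h3 : d.f₁ d.y ∉ ⇑d.f₂ '' B := by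
    rintro ⟨w, -, hw⟩
    exact d.f1_ne_f2 d.y w hw.symm
  have h4 : Disjoint ({d.f₁ d.x} : Set V) {d.f₁ d.y} := Set.disjoint_singleton.mpr hxyne
  have h5 : Disjoint ({d.f₁ d.x} ∪ {d.f₁ d.y} : Set V) (⇑d.f₂ '' B) := by
    rw [Set.disjoint_left]
    rintro v (rfl | rfl) ⟨w, -, hw⟩ <;> exact d.f1_ne_f2 _ w hw.symm
  have h6 : ({d.f₁ d.x, d.f₁ d.y} : Set V) = {d.f₁ d.x} ∪ {d.f₁ d.y} := by
    rw [Set.singleton_union]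
  rw [crossCount_congr G hsub h1, h6, crossCount_union_left G h4 h5,
    crossCount_singleton G h2, crossCount_singleton G h3,
    d.nbhd_f1x B, d.nbhd_f1y B, Set.ncard_image_of_injective _ d.f₂.injective,
    Set.ncard_image_of_injective _ d.f₂.injective]

end CompData

end Comp4
section Counting3

variable {α : Type}

theorem eCount_empty [Finite α] (G : SimpleGraph α) : eCount G (∅ : Set α) = 0 := by
  rw [eCount, Set.ncard_eq_zero (Set.toFinite _)]
  ext e
  refine e.ind (fun a b => ?_)
  simp only [Set.mem_setOf_eq, Set.mem_empty_iff_false, iff_false, not_and]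
  intro _ hv
  exact hv a (Sym2.mem_mk_left a b)

theorem potKYOn_empty [Finite α] (G : SimpleGraph α) : potKYOn G (∅ : Set α) = 0 := by
  rw [potKYOn_eq, eCount_empty, Set.ncard_empty]
  norm_num

theorem potKYOn_singleton [Finite α] (G : SimpleGraph α) (v : α) :
    potKYOn G ({v} : Set α) = 9 := by
  rw [potKYOn_eq, eCount_singleton, Set.ncard_singleton]
  norm_num

theorem potKYOn_ncard_one [Finite α] (G : SimpleGraph α) {R : Set α} (h : R.ncard = 1) :
    potKYOn G R = 9 := by
  obtain ⟨v, rfl⟩ := (Set.ncard_eq_one).mp h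
  exact potKYOn_singleton G v

end Counting3

section Comp5

variable {V V₁ V₂ : Type} {G : SimpleGraph V} {G₁ : SimpleGraph V₁} {G₂ : SimpleGraph V₂}

namespace CompData

variable (d : CompData G G₁ G₂)

theorem R2'_def (R : Set V) : d.R2' R = Subtype.val '' d.R2 R := rfl

variable [Finite V] [Finite V₁] [Finite V₂] {R : Set V}

theorem pot_split_none (hx : d.x ∉ d.R1 R) (hy : d.y ∉ d.R1 R) :
    potKYOn G R = potKYOn G₁ (d.R1 R) + potKYOn G₂ (d.R2' R) := by
  have hcR : eCount G R = eCount G₁ (d.R1 R) + eCount G₂ (d.R2' R) := by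
    conv_lhs => rw [d.R_eq R]
    rw [eCount_union G (d.images_disjoint _ _), d.eCount_f1_not (fun h => hx h.1),
      d.eCount_f2, d.crossCount_none _ hx hy, R2'_def]
    omega
  have hcard : R.ncard = (d.R1 R).ncard + (d.R2 R).ncard := d.ncard_R R
  have hcard2 : (d.R2' R).ncard = (d.R2 R).ncard := d.ncard_R2' R
  rw [potKYOn_eq, potKYOn_eq, potKYOn_eq, hcR, hcard, hcard2]
  push_cast
  ring

theorem pot_split_x (hx : d.x ∈ d.R1 R) (hy : d.y ∉ d.R1 R) :
    potKYOn G R = potKYOn G₁ (d.R1 R) + potKYOn G₂ (insert d.z (d.R2' R)) - 9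
      + 4 * ({w ∈ d.R2 R | G₂.Adj d.z w.1 ∧ w.1 ∉ d.S}.ncard : ℝ) := by
  have hcR : eCount G R = eCount G₁ (d.R1 R) + eCount G₂ (d.R2' R)
      + {w ∈ d.R2 R | w.1 ∈ d.S}.ncard := by
    conv_lhs => rw [d.R_eq R]
    rw [eCount_union G (d.images_disjoint _ _), d.eCount_f1_not (fun h => hy h.2),
      d.eCount_f2, d.crossCount_x _ hx hy, R2'_def]
  have hins : eCount G₂ (insert d.z (d.R2' R)) = eCount G₂ (d.R2' R)
      + ({w ∈ d.R2 R | w.1 ∈ d.S}.ncard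
        + {w ∈ d.R2 R | G₂.Adj d.z w.1 ∧ w.1 ∉ d.S}.ncard) := by
    rw [eCount_insert G₂ (d.z_not_mem_R2' R), R2'_def, d.ncard_nbhd_z]
  have hcard : R.ncard = (d.R1 R).ncard + (d.R2 R).ncard := d.ncard_R R
  have hcard2 : (insert d.z (d.R2' R)).ncard = (d.R2 R).ncard + 1 := by
    rw [Set.ncard_insert_of_notMem (d.z_not_mem_R2' R) (Set.toFinite _), d.ncard_R2']
  rw [potKYOn_eq, potKYOn_eq, potKYOn_eq, hcR, hins, hcard, hcard2]
  push_cast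
  ring

theorem pot_split_y (hx : d.x ∉ d.R1 R) (hy : d.y ∈ d.R1 R) :
    potKYOn G R = potKYOn G₁ (d.R1 R) + potKYOn G₂ (insert d.z (d.R2' R)) - 9
      + 4 * ({w ∈ d.R2 R | w.1 ∈ d.S}.ncard : ℝ) := by
  have hcR : eCount G R = eCount G₁ (d.R1 R) + eCount G₂ (d.R2' R)
      + {w ∈ d.R2 R | G₂.Adj d.z w.1 ∧ w.1 ∉ d.S}.ncard := by
    conv_lhs => rw [d.R_eq R]
    rw [eCount_union G (d.images_disjoint _ _), d.eCount_f1_not (fun h => hx h.1),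
      d.eCount_f2, d.crossCount_y _ hx hy, R2'_def]
  have hins : eCount G₂ (insert d.z (d.R2' R)) = eCount G₂ (d.R2' R)
      + ({w ∈ d.R2 R | w.1 ∈ d.S}.ncard
        + {w ∈ d.R2 R | G₂.Adj d.z w.1 ∧ w.1 ∉ d.S}.ncard) := by
    rw [eCount_insert G₂ (d.z_not_mem_R2' R), R2'_def, d.ncard_nbhd_z]
  have hcard : R.ncard = (d.R1 R).ncard + (d.R2 R).ncard := d.ncard_R R
  have hcard2 : (insert d.z (d.R2' R)).ncard = (d.R2 R).ncard + 1 := by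
    rw [Set.ncard_insert_of_notMem (d.z_not_mem_R2' R) (Set.toFinite _), d.ncard_R2']
  rw [potKYOn_eq, potKYOn_eq, potKYOn_eq, hcR, hins, hcard, hcard2]
  push_cast
  ring

theorem pot_split_both (hx : d.x ∈ d.R1 R) (hy : d.y ∈ d.R1 R) :
    potKYOn G R = potKYOn G₁ (d.R1 R) + potKYOn G₂ (insert d.z (d.R2' R)) - 5 := by
  have hcR : eCount G R + 1 = eCount G₁ (d.R1 R) + (eCount G₂ (d.R2' R)
      + ({w ∈ d.R2 R | w.1 ∈ d.S}.ncard
        + {w ∈ d.R2 R | G₂.Adj d.z w.1 ∧ w.1 ∉ d.S}.ncard)) := by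
    conv_lhs => rw [d.R_eq R]
    rw [eCount_union G (d.images_disjoint _ _), d.eCount_f2, d.crossCount_both _ hx hy,
      R2'_def, ← d.eCount_f1_both hx hy]
    ring
  have hins : eCount G₂ (insert d.z (d.R2' R)) = eCount G₂ (d.R2' R)
      + ({w ∈ d.R2 R | w.1 ∈ d.S}.ncard
        + {w ∈ d.R2 R | G₂.Adj d.z w.1 ∧ w.1 ∉ d.S}.ncard) := by
    rw [eCount_insert G₂ (d.z_not_mem_R2' R), R2'_def, d.ncard_nbhd_z]
  have hcard : R.ncard = (d.R1 R).ncard + (d.R2 R).ncard := d.ncard_R R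
  have hcard2 : (insert d.z (d.R2' R)).ncard = (d.R2 R).ncard + 1 := by
    rw [Set.ncard_insert_of_notMem (d.z_not_mem_R2' R) (Set.toFinite _), d.ncard_R2']
  rw [potKYOn_eq, potKYOn_eq, potKYOn_eq, hins, hcard, hcard2]
  have : (eCount G R : ℝ) = (eCount G₁ (d.R1 R) : ℝ) + ((eCount G₂ (d.R2' R) : ℝ)
      + (({w ∈ d.R2 R | w.1 ∈ d.S}.ncard : ℝ)
        + ({w ∈ d.R2 R | G₂.Adj d.z w.1 ∧ w.1 ∉ d.S}.ncard : ℝ))) - 1 := by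
    have h := congrArg (fun n : ℕ => (n : ℝ)) hcR
    simp only [Nat.cast_add, Nat.cast_one] at h
    linarith
  rw [this]
  push_cast
  ring
end CompData
end Comp5
section MonoDefs

variable {α : Type}

/-- Weak mono: potential 9 and a monochromatic superset of the boundary. -/
def MonoW (G : SimpleGraph α) (R : Set α) : Prop :=
  potKYOn G R = 9 ∧ ∃ U : Set α, boundary G R ⊆ U ∧ U ⊆ R ∧
    ∀ φ : (G.induce R).Coloring (Fin 4), ∀ u v : ↥R, u.1 ∈ U → v.1 ∈ U → φ u = φ v

def Mono (G : SimpleGraph α) (R : Set α) : Prop := MonoW G R ∧ 5 ≤ R.ncard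

/-- The full induction invariant for 5-Ore graphs. -/
def MainP (G : SimpleGraph α) : Prop :=
  Finite α ∧ 5 ≤ Nat.card α ∧ 4 * G.edgeSet.ncard + 5 = 9 * Nat.card α ∧
  ¬ G.Colorable 4 ∧
  ∀ R : Set α, R.Nonempty → R ≠ Set.univ →
    R.ncard = 1 ∨ (12 : ℝ) ≤ potKYOn G R ∨ Mono G R

theorem eCount_univ (G : SimpleGraph α) : eCount G Set.univ = G.edgeSet.ncard := by
  rw [eCount]
  congr 1
  ext e
  simp

theorem potKYOn_univ [Finite α] (G : SimpleGraph α) :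
    potKYOn G Set.univ = 9 * (Nat.card α : ℝ) - 4 * (G.edgeSet.ncard : ℝ) := by
  rw [potKYOn_eq, eCount_univ, Set.ncard_univ]

theorem potKYOn_univ_eq_five [Finite α] {G : SimpleGraph α}
    (h : 4 * G.edgeSet.ncard + 5 = 9 * Nat.card α) : potKYOn G Set.univ = 5 := by
  rw [potKYOn_univ]
  have h' : 4 * (G.edgeSet.ncard : ℝ) + 5 = 9 * (Nat.card α : ℝ) := by exact_mod_cast h
  linarith

theorem edge_count_of_pot_five [Finite α] {G : SimpleGraph α}
    (h : potKYOn G Set.univ = 5) : 4 * G.edgeSet.ncard + 5 = 9 * Nat.card α := by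
  rw [potKYOn_univ] at h
  have : (4 * G.edgeSet.ncard + 5 : ℝ) = 9 * (Nat.card α : ℝ) := by linarith
  exact_mod_cast this

theorem eCount_le_choose [Finite α] (G : SimpleGraph α) (R : Set α) :
    eCount G R ≤ R.ncard.choose 2 := by
  classical
  haveI : Fintype α := Fintype.ofFinite α
  rw [← edgeSet_induce_ncard, Set.ncard_eq_toFinset_card']
  have h := SimpleGraph.card_edgeFinset_le_card_choose_two (G := G.induce R)
  rw [SimpleGraph.edgeFinset] at h
  convert h using 2
  rw [Set.ncard_eq_toFinset_card', Set.toFinset_card]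

/-- p ≥ 9 for nonempty proper subsets, given the invariant's trichotomy. -/
theorem pot_ge_nine [Finite α] {G : SimpleGraph α} {R : Set α}
    (h : R.ncard = 1 ∨ (12 : ℝ) ≤ potKYOn G R ∨ Mono G R) : (9 : ℝ) ≤ potKYOn G R := by
  rcases h with h | h | h
  · rw [potKYOn_ncard_one G h]
  · linarith
  · rw [h.1.1]

theorem mainP_K5 {α : Type} {G : SimpleGraph α} (h : IsK5 G) : MainP G := by
  obtain ⟨e⟩ := h
  haveI hfin : Finite α := Finite.of_equiv _ e.toEquiv.symm
  have hcard : Nat.card α = 5 := by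
    rw [Nat.card_congr e.toEquiv, Nat.card_eq_fintype_card, Fintype.card_fin]
  have hedge : G.edgeSet.ncard = 10 := by
    rw [← Nat.card_coe_set_eq, Nat.card_congr e.mapEdgeSet, Nat.card_coe_set_eq,
      Set.ncard_eq_toFinset_card']
    have := SimpleGraph.card_edgeFinset_top_eq_card_choose_two (V := Fin 5)
    rw [SimpleGraph.edgeFinset] at this
    rw [this]
    rfl
  refine ⟨hfin, by omega, by omega, ?_, ?_⟩
  · intro hc
    exact SimpleGraph.not_cliqueFree_of_top_embedding e.symm.toEmbedding.isContained
      (hc.cliqueFree (by norm_num))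
  · intro R hne hprop
    have h1 : R.ncard ≠ 0 := by
      rw [Ne, Set.ncard_eq_zero (Set.toFinite R)]
      exact hne.ne_empty
    have h4 : R.ncard < 5 := by
      have := Set.ncard_lt_ncard (Set.ssubset_univ_iff.mpr hprop) Set.finite_univ
      rwa [Set.ncard_univ, hcard] at this
    by_cases hone : R.ncard = 1
    · exact Or.inl hone
    right; left
    have hE := eCount_le_choose G R
    rw [potKYOn_eq]
    have hb : (eCount G R : ℝ) ≤ ((R.ncard.choose 2 : ℕ) : ℝ) := by exact_mod_cast hE
    have hval : R.ncard = 2 ∨ R.ncard = 3 ∨ R.ncard = 4 := by omega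
    rcases hval with h | h | h <;> rw [h] at hE ⊢ <;> norm_num at hE ⊢ <;>
      [(have hb' : (eCount G R : ℝ) ≤ 1 := by exact_mod_cast hE);
       (have hb' : (eCount G R : ℝ) ≤ 3 := by exact_mod_cast hE);
       (have hb' : (eCount G R : ℝ) ≤ 6 := by exact_mod_cast hE)] <;> linarith
  
end MonoDefs
section Comp6

variable {V V₁ V₂ : Type} {G : SimpleGraph V} {G₁ : SimpleGraph V₁} {G₂ : SimpleGraph V₂}

theorem colorable_of_induce_univ {α : Type} {G : SimpleGraph α}
    (ψ : (G.induce Set.univ).Coloring (Fin 4)) : G.Colorable 4 :=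
  ⟨SimpleGraph.Coloring.mk (fun v => ψ ⟨v, trivial⟩) (fun hab => ψ.valid hab)⟩

namespace CompData

variable (d : CompData G G₁ G₂)

/-- The symmetric composition data, with the roles of `x` and `y` interchanged. -/
def symm : CompData G G₁ G₂ where
  x := d.y
  y := d.x
  z := d.z
  f₁ := d.f₁
  f₂ := d.f₂
  S := G₂.neighborSet d.z \ d.S
  hxy := d.hxy.symm
  hS := fun w hw => hw.1
  hSne := d.hTne
  hTne := by
    obtain ⟨w, hw⟩ := d.hSne
    exact ⟨w, d.hS w hw, fun hc => hc.2 hw⟩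
  hdisj := d.hdisj
  huniv := d.huniv
  hadj := by
    intro a b
    rw [d.hadj a b]
    constructor
    · rintro (⟨a', b', h1, h2, h3, h4, h5⟩ | h | ⟨w, hw, hcase⟩)
      · exact Or.inl ⟨a', b', h1, h2, h3, h5, h4⟩
      · exact Or.inr (Or.inl h)
      · refine Or.inr (Or.inr ⟨w, hw, ?_⟩)
        rcases hcase with ⟨hh, hmem⟩ | ⟨hh, hmem⟩
        · exact Or.inr ⟨hh, fun hc => hc.2 hmem⟩
        · exact Or.inl ⟨hh, ⟨hw, hmem⟩⟩
    · rintro (⟨a', b', h1, h2, h3, h4, h5⟩ | h | ⟨w, hw, hcase⟩)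
      · exact Or.inl ⟨a', b', h1, h2, h3, h5, h4⟩
      · exact Or.inr (Or.inl h)
      · refine Or.inr (Or.inr ⟨w, hw, ?_⟩)
        rcases hcase with ⟨hh, hmem⟩ | ⟨hh, hmem⟩
        · exact Or.inr ⟨hh, hmem.2⟩
        · refine Or.inl ⟨hh, ?_⟩
          by_contra hS
          exact hmem ⟨hw, hS⟩

theorem symm_R1 (R : Set V) : d.symm.R1 R = d.R1 R := rfl
theorem symm_R2 (R : Set V) : d.symm.R2 R = d.R2 R := rfl
theorem symm_R2' (R : Set V) : d.symm.R2' R = d.R2' R := rfl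
theorem symm_x : d.symm.x = d.y := rfl
theorem symm_y : d.symm.y = d.x := rfl
theorem symm_z : d.symm.z = d.z := rfl

theorem mem_R2'_ne {R : Set V} {v : V₂} (h : v ∈ d.R2' R) : v ≠ d.z := by
  obtain ⟨u, -, rfl⟩ := h
  exact u.2

theorem mem_R2'_mem {R : Set V} {v : V₂} (h : v ∈ d.R2' R) (hv : v ≠ d.z) :
    d.f₂ ⟨v, hv⟩ ∈ R := by
  obtain ⟨u, hu, huv⟩ := h
  have : u = ⟨v, hv⟩ := Subtype.ext huv
  exact this ▸ hu

theorem mem_insert_R2'_mem {R : Set V} {v : V₂} (h : v ∈ insert d.z (d.R2' R))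
    (hv : v ≠ d.z) : d.f₂ ⟨v, hv⟩ ∈ R := by
  rcases h with rfl | h
  · exact absurd rfl hv
  · exact d.mem_R2'_mem h hv

/-- Restriction of a coloring of `G[R]` to the `G₁`-side, when not both `x, y` lie in `R`. -/
def res1_not {R : Set V} (φ : (G.induce R).Coloring (Fin 4))
    (hnb : ¬(d.x ∈ d.R1 R ∧ d.y ∈ d.R1 R)) : (G₁.induce (d.R1 R)).Coloring (Fin 4) :=
  SimpleGraph.Coloring.mk (fun a => φ ⟨d.f₁ a.1, a.2⟩) (by
    rintro ⟨a, ha⟩ ⟨b, hb⟩ hab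
    apply φ.valid
    rw [induce_adj'] at hab ⊢
    rw [d.adj_f1f1]
    exact ⟨hab, fun hc => hnb ⟨hc.1 ▸ ha, hc.2 ▸ hb⟩,
      fun hc => hnb ⟨hc.2 ▸ hb, hc.1 ▸ ha⟩⟩)

/-- Restriction of a coloring of `G[R]` to the `G₁`-side, when `x, y ∈ R` but get
different colors. -/
def res1_ne {R : Set V} (φ : (G.induce R).Coloring (Fin 4)) (hx : d.x ∈ d.R1 R)
    (hy : d.y ∈ d.R1 R) (hne : φ ⟨d.f₁ d.x, hx⟩ ≠ φ ⟨d.f₁ d.y, hy⟩) :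
    (G₁.induce (d.R1 R)).Coloring (Fin 4) :=
  SimpleGraph.Coloring.mk (fun a => φ ⟨d.f₁ a.1, a.2⟩) (by
    rintro ⟨a, ha⟩ ⟨b, hb⟩ hab
    rw [induce_adj'] at hab
    by_cases h1 : a = d.x ∧ b = d.y
    · obtain ⟨rfl, rfl⟩ := h1
      exact hne
    by_cases h2 : a = d.y ∧ b = d.x
    · obtain ⟨rfl, rfl⟩ := h2
      exact hne.symm
    apply φ.valid
    rw [induce_adj']
    rw [d.adj_f1f1]
    exact ⟨hab, h1, h2⟩)

/-- Restriction of a coloring of `G[R]` to the `G₂`-side (without `z`). -/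
def res2 {R : Set V} (φ : (G.induce R).Coloring (Fin 4)) :
    (G₂.induce (d.R2' R)).Coloring (Fin 4) :=
  SimpleGraph.Coloring.mk
    (fun w => φ ⟨d.f₂ ⟨w.1, d.mem_R2'_ne w.2⟩, d.mem_R2'_mem w.2 (d.mem_R2'_ne w.2)⟩) (by
    rintro ⟨a, ha⟩ ⟨b, hb⟩ hab
    rw [induce_adj'] at hab
    apply φ.valid
    rw [induce_adj', d.adj_f2f2]
    exact hab)

open Classical in
noncomputable def res2i {R : Set V} (φ : (G.induce R).Coloring (Fin 4)) (hx : d.f₁ d.x ∈ R)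
    (hT : ∀ (u : {w : V₂ // w ≠ d.z}) (hu : d.f₂ u ∈ R), G₂.Adj d.z u.1 → u.1 ∉ d.S →
      φ ⟨d.f₂ u, hu⟩ ≠ φ ⟨d.f₁ d.x, hx⟩) :
    (G₂.induce (insert d.z (d.R2' R))).Coloring (Fin 4) :=
  SimpleGraph.Coloring.mk
    (fun w => if h : w.1 = d.z then φ ⟨d.f₁ d.x, hx⟩
      else φ ⟨d.f₂ ⟨w.1, h⟩, d.mem_insert_R2'_mem w.2 h⟩) (by
    rintro ⟨a, ha⟩ ⟨b, hb⟩ hab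
    rw [induce_adj'] at hab
    by_cases haz : a = d.z <;> by_cases hbz : b = d.z
    · subst haz; subst hbz; exact absurd hab G₂.irrefl
    · subst haz
      simp only [dif_pos rfl, dif_neg hbz]
      by_cases hbS : b ∈ d.S
      · exact φ.valid (show (G.induce R).Adj ⟨d.f₁ d.x, hx⟩
          ⟨d.f₂ ⟨b, hbz⟩, d.mem_insert_R2'_mem hb hbz⟩ from
            (d.adj_f1x_f2 (w := ⟨b, hbz⟩)).mpr hbS)
      · exact (hT ⟨b, hbz⟩ (d.mem_insert_R2'_mem hb hbz) hab hbS).symm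
    · subst hbz
      simp only [dif_pos rfl, dif_neg haz]
      by_cases haS : a ∈ d.S
      · exact (φ.valid (show (G.induce R).Adj ⟨d.f₁ d.x, hx⟩
          ⟨d.f₂ ⟨a, haz⟩, d.mem_insert_R2'_mem ha haz⟩ from
            (d.adj_f1x_f2 (w := ⟨a, haz⟩)).mpr haS)).symm
      · exact hT ⟨a, haz⟩ (d.mem_insert_R2'_mem ha haz) hab.symm haS
    · simp only [dif_neg haz, dif_neg hbz]
      apply φ.valid
      rw [induce_adj', d.adj_f2f2]
      exact hab)

end CompData

end Comp6
section Comp7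

variable {V V₁ V₂ : Type} {G : SimpleGraph V} {G₁ : SimpleGraph V₁} {G₂ : SimpleGraph V₂}

namespace CompData

variable (d : CompData G G₁ G₂)

theorem not_mem_R2'_of {R : Set V} {u : {w : V₂ // w ≠ d.z}} (h : u ∉ d.R2 R) :
    u.1 ∉ d.R2' R := by
  rintro ⟨u', hm, hval⟩
  exact h (Subtype.ext hval ▸ hm)

theorem mem_R2'_of {R : Set V} {u : {w : V₂ // w ≠ d.z}} (h : u ∈ d.R2 R) :
    u.1 ∈ d.R2' R := ⟨u, h, rfl⟩

theorem boundary_cases {R : Set V} {v : V} (hv : v ∈ boundary G R) :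
    (∃ a ∈ boundary G₁ (d.R1 R), v = d.f₁ a) ∨
    (∃ u : {w : V₂ // w ≠ d.z}, u ∈ d.R2 R ∧ v = d.f₂ u ∧
      ((∃ u' : {w : V₂ // w ≠ d.z}, u' ∉ d.R2 R ∧ G₂.Adj u.1 u'.1) ∨
       (d.x ∉ d.R1 R ∧ u.1 ∈ d.S) ∨
       (d.y ∉ d.R1 R ∧ G₂.Adj d.z u.1 ∧ u.1 ∉ d.S))) ∨
    (v = d.f₁ d.x ∧ d.x ∈ d.R1 R ∧ ∃ u : {w : V₂ // w ≠ d.z}, u ∉ d.R2 R ∧ u.1 ∈ d.S) ∨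
    (v = d.f₁ d.y ∧ d.y ∈ d.R1 R ∧
      ∃ u : {w : V₂ // w ≠ d.z}, u ∉ d.R2 R ∧ G₂.Adj d.z u.1 ∧ u.1 ∉ d.S) := by
  obtain ⟨hvR, w, hwR, hadj⟩ := hv
  rcases d.cover v with ⟨a, rfl⟩ | ⟨u, rfl⟩
  · rcases d.cover w with ⟨b, rfl⟩ | ⟨u, rfl⟩
    · left
      rw [d.adj_f1f1] at hadj
      exact ⟨a, ⟨hvR, b, hwR, hadj.1⟩, rfl⟩
    · rcases d.adj_f1_f2_cases hadj with ⟨rfl, hu⟩ | ⟨rfl, hadj2, hu⟩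
      · exact Or.inr (Or.inr (Or.inl ⟨rfl, hvR, u, hwR, hu⟩))
      · exact Or.inr (Or.inr (Or.inr ⟨rfl, hvR, u, hwR, hadj2, hu⟩))
  · right; left
    rcases d.cover w with ⟨b, rfl⟩ | ⟨u', rfl⟩
    · rcases d.adj_f1_f2_cases hadj.symm with ⟨rfl, hu⟩ | ⟨rfl, hadj2, hu⟩
      · exact ⟨u, hvR, rfl, Or.inr (Or.inl ⟨hwR, hu⟩)⟩
      · exact ⟨u, hvR, rfl, Or.inr (Or.inr ⟨hwR, hadj2, hu⟩)⟩
    · rw [d.adj_f2f2] at hadj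
      exact ⟨u, hvR, rfl, Or.inl ⟨u', hwR, hadj⟩⟩

theorem univ_of_R1_R2 {R : Set V} (hA : d.R1 R = Set.univ) (hB : d.R2 R = Set.univ) :
    R = Set.univ := by
  rw [d.R_eq R, hA, hB]
  rw [Set.image_univ, Set.image_univ, d.huniv]

theorem insert_R2'_univ {R : Set V} (hB : d.R2 R = Set.univ) :
    insert d.z (d.R2' R) = Set.univ := by
  ext v
  simp only [Set.mem_insert_iff, Set.mem_univ, iff_true]
  by_cases hv : v = d.z
  · exact Or.inl hv
  · exact Or.inr (d.mem_R2'_of (hB ▸ Set.mem_univ (⟨v, hv⟩ : {w : V₂ // w ≠ d.z})))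

theorem R2_univ_of_insert {R : Set V} (h : insert d.z (d.R2' R) = Set.univ) :
    d.R2 R = Set.univ := by
  ext u
  simp only [Set.mem_univ, iff_true]
  have : u.1 ∈ insert d.z (d.R2' R) := h ▸ Set.mem_univ _
  rcases this with h' | h'
  · exact absurd h' u.2
  · have := d.mem_R2'_mem h' u.2
    exact (by exact this : u ∈ d.R2 R)

theorem R_of_R2_empty {R : Set V} (hB : d.R2 R = ∅) : R = ⇑d.f₁ '' d.R1 R := by
  nth_rewrite 1 [d.R_eq R]
  rw [hB, Set.image_empty, Set.union_empty]

theorem mem_of_R1_univ {R : Set V} (hA : d.R1 R = Set.univ) (a : V₁) : d.f₁ a ∈ R := by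
  have : a ∈ d.R1 R := hA ▸ Set.mem_univ a
  exact this

/-- If all of the `G₂`-side is in `R` and both `f₁ x, f₁ y ∈ R`, then the colors of
`f₁ x` and `f₁ y` differ in every coloring of `G[R]`. -/
theorem fact_ne {R : Set V} (hx : d.x ∈ d.R1 R) (hy : d.y ∈ d.R1 R)
    (hB : d.R2 R = Set.univ) (hcol₂ : ¬ G₂.Colorable 4)
    (φ : (G.induce R).Coloring (Fin 4)) : φ ⟨d.f₁ d.x, hx⟩ ≠ φ ⟨d.f₁ d.y, hy⟩ := by
  intro heq
  have hT : ∀ (u : {w : V₂ // w ≠ d.z}) (hu : d.f₂ u ∈ R), G₂.Adj d.z u.1 → u.1 ∉ d.S →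
      φ ⟨d.f₂ u, hu⟩ ≠ φ ⟨d.f₁ d.x, hx⟩ := by
    intro u hu hadj huS
    rw [heq]
    exact (φ.valid (show (G.induce R).Adj ⟨d.f₁ d.y, hy⟩ ⟨d.f₂ u, hu⟩ from
      (d.adj_f1y_f2).mpr ⟨hadj, huS⟩)).symm
  have ψ := d.res2i φ hx hT
  rw [d.insert_R2'_univ hB] at ψ
  exact hcol₂ (colorable_of_induce_univ ψ)

/-- If all of `V₁` is in `R`, the colors of `f₁ x` and `f₁ y` agree in every coloring. -/
theorem fact_eq {R : Set V} (hA : d.R1 R = Set.univ) (hcol₁ : ¬ G₁.Colorable 4)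
    (φ : (G.induce R).Coloring (Fin 4)) :
    φ ⟨d.f₁ d.x, d.mem_of_R1_univ hA d.x⟩ = φ ⟨d.f₁ d.y, d.mem_of_R1_univ hA d.y⟩ := by
  by_contra hne
  have ψ := d.res1_ne φ (d.mem_of_R1_univ hA d.x) (d.mem_of_R1_univ hA d.y) hne
  rw [hA] at ψ
  exact hcol₁ (colorable_of_induce_univ ψ)

/-- If all of the `G₂`-side is in `R`, `f₁ x ∈ R` and `w₀` is the unique non-`S`
neighbour of `z`, then `f₂ w₀` gets the color of `f₁ x` in every coloring of `G[R]`. -/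
theorem fact_w0 {R : Set V} (hx : d.x ∈ d.R1 R) (hB : d.R2 R = Set.univ)
    (hcol₂ : ¬ G₂.Colorable 4) {w₀ : {w : V₂ // w ≠ d.z}}
    (hT1 : ∀ u : {w : V₂ // w ≠ d.z}, G₂.Adj d.z u.1 → u.1 ∉ d.S → u = w₀)
    (hw₀ : d.f₂ w₀ ∈ R) (φ : (G.induce R).Coloring (Fin 4)) :
    φ ⟨d.f₂ w₀, hw₀⟩ = φ ⟨d.f₁ d.x, hx⟩ := by
  by_contra hne
  have hT : ∀ (u : {w : V₂ // w ≠ d.z}) (hu : d.f₂ u ∈ R), G₂.Adj d.z u.1 → u.1 ∉ d.S →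
      φ ⟨d.f₂ u, hu⟩ ≠ φ ⟨d.f₁ d.x, hx⟩ := by
    intro u hu hadj huS
    have := hT1 u hadj huS
    subst this
    exact hne
  have ψ := d.res2i φ hx hT
  rw [d.insert_R2'_univ hB] at ψ
  exact hcol₂ (colorable_of_induce_univ ψ)

end CompData

end Comp7
section Comp8

variable {V V₁ V₂ : Type} {G : SimpleGraph V} {G₁ : SimpleGraph V₁} {G₂ : SimpleGraph V₂}

namespace CompData

variable (d : CompData G G₁ G₂)

theorem res2i_z {R : Set V} (φ : (G.induce R).Coloring (Fin 4)) (hx : d.f₁ d.x ∈ R)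
    (hT : ∀ (u : {w : V₂ // w ≠ d.z}) (hu : d.f₂ u ∈ R), G₂.Adj d.z u.1 → u.1 ∉ d.S →
      φ ⟨d.f₂ u, hu⟩ ≠ φ ⟨d.f₁ d.x, hx⟩) :
    d.res2i φ hx hT ⟨d.z, Set.mem_insert _ _⟩ = φ ⟨d.f₁ d.x, hx⟩ := dif_pos rfl

theorem res2i_f2 {R : Set V} (φ : (G.induce R).Coloring (Fin 4)) (hx : d.f₁ d.x ∈ R)
    (hT : ∀ (u : {w : V₂ // w ≠ d.z}) (hu : d.f₂ u ∈ R), G₂.Adj d.z u.1 → u.1 ∉ d.S →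
      φ ⟨d.f₂ u, hu⟩ ≠ φ ⟨d.f₁ d.x, hx⟩)
    (u : {w : V₂ // w ≠ d.z}) (h : u.1 ∈ insert d.z (d.R2' R)) :
    d.res2i φ hx hT ⟨u.1, h⟩ = φ ⟨d.f₂ u, d.mem_insert_R2'_mem h u.2⟩ := dif_neg u.2

theorem card_split [Finite V₂] : Nat.card {w : V₂ // w ≠ d.z} + 1 = Nat.card V₂ := by
  classical
  have h2 := Nat.card_congr (Equiv.sumCompl (· ≠ d.z))
  rw [Nat.card_sum] at h2
  have h3 : Nat.card {a : V₂ // ¬ a ≠ d.z} = 1 := by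
    rw [Nat.card_eq_one_iff_unique]
    refine ⟨⟨fun a b => ?_⟩, ⟨⟨d.z, by simp⟩⟩⟩
    obtain ⟨a, ha⟩ := a; obtain ⟨b, hb⟩ := b
    simp only [ne_eq, not_not] at ha hb
    subst ha; subst hb; rfl
  omega

variable [Finite V] [Finite V₁] [Finite V₂]

/-- Transfer of Mono from `G₁` when `R` lives entirely on the `G₁` side. -/
theorem mono_T1 {R : Set V} (hB : d.R2 R = ∅) (hnb : ¬(d.x ∈ d.R1 R ∧ d.y ∈ d.R1 R))
    (hM : Mono G₁ (d.R1 R)) (hp : potKYOn G R = 9) : Mono G R := by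
  obtain ⟨⟨hp₁, U₁, hb₁, hs₁, hc₁⟩, hcard₁⟩ := hM
  have hcard : 5 ≤ R.ncard := by
    rw [d.ncard_R R, hB, Set.ncard_empty] at *
    omega
  refine ⟨⟨hp, ⇑d.f₁ '' U₁, ?_, ?_, ?_⟩, hcard⟩
  · intro v hv
    rcases d.boundary_cases hv with ⟨a, hab, rfl⟩ | ⟨u, hu, -⟩ | ⟨rfl, hx1, -⟩ |
      ⟨rfl, hy1, -⟩
    · exact ⟨a, hb₁ hab, rfl⟩
    · rw [hB] at hu; exact absurd hu (Set.notMem_empty u)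
    · have hy1 : d.y ∉ d.R1 R := fun hc => hnb ⟨hx1, hc⟩
      exact ⟨d.x, hb₁ ⟨hx1, d.y, hy1, d.hxy⟩, rfl⟩
    · have hx1 : d.x ∉ d.R1 R := fun hc => hnb ⟨hc, hy1⟩
      exact ⟨d.y, hb₁ ⟨hy1, d.x, hx1, d.hxy.symm⟩, rfl⟩
  · rintro v ⟨a, ha, rfl⟩
    exact (hs₁ ha : a ∈ d.R1 R)
  · intro φ u v hu hv
    obtain ⟨a, haU, hav⟩ := hu
    obtain ⟨b, hbU, hbv⟩ := hv
    have ha1 : a ∈ d.R1 R := hs₁ haU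
    have hb1 : b ∈ d.R1 R := hs₁ hbU
    have hkey := hc₁ (d.res1_not φ hnb) ⟨a, ha1⟩ ⟨b, hb1⟩ haU hbU
    have hu' : u = ⟨d.f₁ a, ha1⟩ := Subtype.ext hav.symm
    have hv' : v = ⟨d.f₁ b, hb1⟩ := Subtype.ext hbv.symm
    rw [hu', hv']
    exact hkey

/-- Transfer of Mono from `G₂` when `R` lives entirely on the `G₂` side. -/
theorem mono_T2 {R : Set V} (hA : d.R1 R = ∅)
    (hM : Mono G₂ (d.R2' R)) (hp : potKYOn G R = 9) : Mono G R := by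
  obtain ⟨⟨hp₂, U₂, hb₂, hs₂, hc₂⟩, hcard₂⟩ := hM
  have hcard : 5 ≤ R.ncard := by
    have := d.ncard_R R
    rw [hA, Set.ncard_empty] at this
    rw [← d.ncard_R2' R] at *
    omega
  refine ⟨⟨hp, ⇑d.f₂ '' {u : {w : V₂ // w ≠ d.z} | u.1 ∈ U₂}, ?_, ?_, ?_⟩, hcard⟩
  · intro v hv
    rcases d.boundary_cases hv with ⟨a, hab, rfl⟩ | ⟨u, hu, rfl, hcase⟩ | ⟨-, hx1, -⟩ |
      ⟨-, hy1, -⟩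
    · obtain ⟨ha, -⟩ := hab
      rw [hA] at ha; exact absurd ha (Set.notMem_empty _)
    · refine ⟨u, ?_, rfl⟩
      rcases hcase with ⟨u', hu', hadj⟩ | ⟨-, hS⟩ | ⟨-, hadj, -⟩
      · exact hb₂ ⟨d.mem_R2'_of hu, u'.1, d.not_mem_R2'_of hu', hadj⟩
      · exact hb₂ ⟨d.mem_R2'_of hu, d.z, d.z_not_mem_R2' R, (d.hS _ hS).symm⟩
      · exact hb₂ ⟨d.mem_R2'_of hu, d.z, d.z_not_mem_R2' R, hadj.symm⟩
    · rw [hA] at hx1; exact absurd hx1 (Set.notMem_empty _)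
    · rw [hA] at hy1; exact absurd hy1 (Set.notMem_empty _)
  · rintro v ⟨u, hu, rfl⟩
    have := hs₂ hu
    exact d.mem_R2'_mem this u.2
  · intro φ u v hu hv
    obtain ⟨a, haU, hav⟩ := hu
    obtain ⟨b, hbU, hbv⟩ := hv
    have ha2 : a.1 ∈ d.R2' R := hs₂ haU
    have hb2 : b.1 ∈ d.R2' R := hs₂ hbU
    have hkey := hc₂ (d.res2 φ) ⟨a.1, ha2⟩ ⟨b.1, hb2⟩ haU hbU
    have hu' : u = ⟨d.f₂ a, d.mem_R2'_mem ha2 a.2⟩ := Subtype.ext hav.symm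
    have hv' : v = ⟨d.f₂ b, d.mem_R2'_mem hb2 b.2⟩ := Subtype.ext hbv.symm
    rw [hu', hv']
    exact hkey

end CompData

end Comp8
section Comp9

set_option linter.unusedSectionVars false

variable {V V₁ V₂ : Type} {G : SimpleGraph V} {G₁ : SimpleGraph V₁} {G₂ : SimpleGraph V₂}

namespace CompData

variable (d : CompData G G₁ G₂) [Finite V] [Finite V₁] [Finite V₂]

theorem ncard_R2_univ (hB : d.R2 R = Set.univ) (hn₂ : 5 ≤ Nat.card V₂) :
    4 ≤ (d.R2 (R : Set V)).ncard := by
  rw [hB, Set.ncard_univ]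
  have := d.card_split
  omega

/-- Case: `x ∈ R`, `y ∉ R`, all of the `G₂` side inside `R`, unique non-`S` neighbour `w₀`. -/
theorem mono_C2 {R : Set V} (hx : d.x ∈ d.R1 R) (hy : d.y ∉ d.R1 R)
    (hB : d.R2 R = Set.univ) (hcol₂ : ¬ G₂.Colorable 4) (hn₂ : 5 ≤ Nat.card V₂)
    {w₀ : {w : V₂ // w ≠ d.z}}
    (hT1 : ∀ u : {w : V₂ // w ≠ d.z}, G₂.Adj d.z u.1 → u.1 ∉ d.S → u = w₀)
    {U₁ : Set V₁} (hb₁ : boundary G₁ (d.R1 R) ⊆ U₁) (hs₁ : U₁ ⊆ d.R1 R)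
    (hc₁ : ∀ ψ : (G₁.induce (d.R1 R)).Coloring (Fin 4), ∀ a b : ↥(d.R1 R),
      a.1 ∈ U₁ → b.1 ∈ U₁ → ψ a = ψ b)
    (hx₁ : d.x ∈ U₁) (hp : potKYOn G R = 9) : Mono G R := by
  have hnb : ¬(d.x ∈ d.R1 R ∧ d.y ∈ d.R1 R) := fun h => hy h.2
  have hw₀R : d.f₂ w₀ ∈ R := (show w₀ ∈ d.R2 R from hB ▸ Set.mem_univ w₀)
  have hcard : 5 ≤ R.ncard := by
    have h1 := d.ncard_R R
    have h2 := d.ncard_R2_univ (R := R) hB hn₂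
    have h3 : 1 ≤ (d.R1 R).ncard := (Set.ncard_pos (Set.toFinite _)).mpr ⟨d.x, hx⟩
    omega
  refine ⟨⟨hp, ⇑d.f₁ '' U₁ ∪ {d.f₂ w₀}, ?_, ?_, ?_⟩, hcard⟩
  · intro v hv
    rcases d.boundary_cases hv with ⟨a, hab, rfl⟩ | ⟨u, hu, rfl, hcase⟩ | ⟨rfl, -, -⟩ |
      ⟨-, hy1, -⟩
    · exact Or.inl ⟨a, hb₁ hab, rfl⟩
    · rcases hcase with ⟨u', hu', -⟩ | ⟨hx1, -⟩ | ⟨-, hadj, hS⟩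
      · exact absurd (hB ▸ Set.mem_univ u') hu'
      · exact absurd hx hx1
      · rw [hT1 u hadj hS]
        exact Or.inr rfl
    · exact Or.inl ⟨d.x, hx₁, rfl⟩
    · exact absurd hy1 hy
  · rintro v (⟨a, ha, rfl⟩ | rfl)
    · exact (hs₁ ha : a ∈ d.R1 R)
    · exact hw₀R
  · intro φ u v hu hv
    have key : ∀ w : ↥R, w.1 ∈ ⇑d.f₁ '' U₁ ∪ {d.f₂ w₀} → φ w = φ ⟨d.f₁ d.x, hx⟩ := by
      rintro w (⟨a, haU, hav⟩ | hw)
      · have ha1 : a ∈ d.R1 R := hs₁ haU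
        have hkey := hc₁ (d.res1_not φ hnb) ⟨a, ha1⟩ ⟨d.x, hx⟩ haU hx₁
        have hw' : w = ⟨d.f₁ a, ha1⟩ := Subtype.ext hav.symm
        rw [hw']
        exact hkey
      · have hw' : w = ⟨d.f₂ w₀, hw₀R⟩ := Subtype.ext hw
        rw [hw']
        exact d.fact_w0 hx hB hcol₂ hT1 hw₀R φ
    rw [key u hu, key v hv]

/-- Case: `x ∈ R`, `y ∉ R`, no non-`S` neighbour of `z` inside `R`, Mono on the `G₂` side. -/
theorem mono_C3 {R : Set V} (hx : d.x ∈ d.R1 R) (hy : d.y ∉ d.R1 R)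
    (htB : ∀ u : {w : V₂ // w ≠ d.z}, u ∈ d.R2 R → G₂.Adj d.z u.1 → u.1 ∉ d.S → False)
    {U₂ : Set V₂} (hb₂ : boundary G₂ (insert d.z (d.R2' R)) ⊆ U₂)
    (hs₂ : U₂ ⊆ insert d.z (d.R2' R))
    (hc₂ : ∀ ψ : (G₂.induce (insert d.z (d.R2' R))).Coloring (Fin 4),
      ∀ a b : ↥(insert d.z (d.R2' R)), a.1 ∈ U₂ → b.1 ∈ U₂ → ψ a = ψ b)
    (hcard₂ : 5 ≤ (insert d.z (d.R2' R)).ncard)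
    {U₁ : Set V₁} (hb₁ : boundary G₁ (d.R1 R) ⊆ U₁) (hs₁ : U₁ ⊆ d.R1 R)
    (hc₁ : ∀ ψ : (G₁.induce (d.R1 R)).Coloring (Fin 4), ∀ a b : ↥(d.R1 R),
      a.1 ∈ U₁ → b.1 ∈ U₁ → ψ a = ψ b)
    (hx₁ : d.x ∈ U₁) (hp : potKYOn G R = 9) : Mono G R := by
  have hnb : ¬(d.x ∈ d.R1 R ∧ d.y ∈ d.R1 R) := fun h => hy h.2
  have hzb : d.z ∈ boundary G₂ (insert d.z (d.R2' R)) := by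
    obtain ⟨w, hwN, hwS⟩ := d.hTne
    have hadj : G₂.Adj d.z w := hwN
    have hwz : w ≠ d.z := hadj.ne'
    refine ⟨Set.mem_insert _ _, w, ?_, hadj⟩
    rintro (h | h)
    · exact hwz h
    · exact htB ⟨w, hwz⟩ (d.mem_R2'_mem h hwz) hadj hwS
  have hzU₂ : d.z ∈ U₂ := hb₂ hzb
  have hcard : 5 ≤ R.ncard := by
    have h1 := d.ncard_R R
    have h2 : (insert d.z (d.R2' R)).ncard = (d.R2 R).ncard + 1 := by
      rw [Set.ncard_insert_of_notMem (d.z_not_mem_R2' R) (Set.toFinite _), d.ncard_R2']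
    have h3 : 1 ≤ (d.R1 R).ncard := (Set.ncard_pos (Set.toFinite _)).mpr ⟨d.x, hx⟩
    omega
  refine ⟨⟨hp, ⇑d.f₁ '' U₁ ∪ ⇑d.f₂ '' {u : {w : V₂ // w ≠ d.z} | u ∈ d.R2 R ∧ u.1 ∈ U₂},
    ?_, ?_, ?_⟩, hcard⟩
  · intro v hv
    rcases d.boundary_cases hv with ⟨a, hab, rfl⟩ | ⟨u, hu, rfl, hcase⟩ | ⟨rfl, -, -⟩ |
      ⟨-, hy1, -⟩
    · exact Or.inl ⟨a, hb₁ hab, rfl⟩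
    · rcases hcase with ⟨u', hu', hadj⟩ | ⟨hx1, -⟩ | ⟨-, hadj, hS⟩
      · refine Or.inr ⟨u, ⟨hu, hb₂ ⟨Set.mem_insert_iff.mpr (Or.inr (d.mem_R2'_of hu)),
          u'.1, ?_, hadj⟩⟩, rfl⟩
        rintro (h | h)
        · exact u'.2 h
        · exact d.not_mem_R2'_of hu' h
      · exact absurd hx hx1
      · exact absurd (htB u hu hadj hS) not_false
    · exact Or.inl ⟨d.x, hx₁, rfl⟩
    · exact absurd hy1 hy
  · rintro v (⟨a, ha, rfl⟩ | ⟨u, ⟨hu, -⟩, rfl⟩)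
    · exact (hs₁ ha : a ∈ d.R1 R)
    · exact hu
  · intro φ u v hu hv
    have hT : ∀ (u : {w : V₂ // w ≠ d.z}) (hu : d.f₂ u ∈ R), G₂.Adj d.z u.1 → u.1 ∉ d.S →
        φ ⟨d.f₂ u, hu⟩ ≠ φ ⟨d.f₁ d.x, hx⟩ :=
      fun u hu hadj huS => absurd (htB u hu hadj huS) not_false
    have key : ∀ w : ↥R,
        w.1 ∈ ⇑d.f₁ '' U₁ ∪ ⇑d.f₂ '' {u : {w : V₂ // w ≠ d.z} | u ∈ d.R2 R ∧ u.1 ∈ U₂} →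
        φ w = φ ⟨d.f₁ d.x, hx⟩ := by
      rintro w (⟨a, haU, hav⟩ | ⟨u', ⟨hu', hu'U⟩, hav⟩)
      · have ha1 : a ∈ d.R1 R := hs₁ haU
        have hkey := hc₁ (d.res1_not φ hnb) ⟨a, ha1⟩ ⟨d.x, hx⟩ haU hx₁
        have hw' : w = ⟨d.f₁ a, ha1⟩ := Subtype.ext hav.symm
        rw [hw']
        exact hkey
      · have hmemQ : u'.1 ∈ insert d.z (d.R2' R) :=
          Set.mem_insert_iff.mpr (Or.inr (d.mem_R2'_of hu'))
        have hkey := hc₂ (d.res2i φ hx hT) ⟨u'.1, hmemQ⟩ ⟨d.z, Set.mem_insert _ _⟩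
          hu'U hzU₂
        rw [d.res2i_f2 φ hx hT u' hmemQ, d.res2i_z φ hx hT] at hkey
        have hw' : w = ⟨d.f₂ u', d.mem_insert_R2'_mem hmemQ u'.2⟩ := Subtype.ext hav.symm
        rw [hw']
        exact hkey
    rw [key u hu, key v hv]

/-- Case: all of `V₁` inside `R`, nothing of the `G₂` side. -/
theorem mono_C4 {R : Set V} (hA : d.R1 R = Set.univ) (hB : d.R2 R = ∅)
    (hcol₁ : ¬ G₁.Colorable 4) (hn₁ : 5 ≤ Nat.card V₁) (hp : potKYOn G R = 9) :
    Mono G R := by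
  have hcard : 5 ≤ R.ncard := by
    have h1 := d.ncard_R R
    rw [hA, hB, Set.ncard_univ, Set.ncard_empty] at h1
    omega
  refine ⟨⟨hp, {d.f₁ d.x, d.f₁ d.y}, ?_, ?_, ?_⟩, hcard⟩
  · intro v hv
    rcases d.boundary_cases hv with ⟨a, hab, rfl⟩ | ⟨u, hu, -⟩ | ⟨rfl, -, -⟩ | ⟨rfl, -, -⟩
    · obtain ⟨-, b, hb, -⟩ := hab
      rw [hA] at hb
      exact absurd (Set.mem_univ b) hb
    · rw [hB] at hu
      exact absurd hu (Set.notMem_empty u)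
    · exact Or.inl rfl
    · exact Or.inr rfl
  · rintro v (rfl | rfl)
    · exact d.mem_of_R1_univ hA d.x
    · exact d.mem_of_R1_univ hA d.y
  · intro φ u v hu hv
    have key : ∀ w : ↥R, w.1 ∈ ({d.f₁ d.x, d.f₁ d.y} : Set V) →
        φ w = φ ⟨d.f₁ d.x, d.mem_of_R1_univ hA d.x⟩ := by
      rintro w (hw | hw)
      · have hw' : w = ⟨d.f₁ d.x, d.mem_of_R1_univ hA d.x⟩ := Subtype.ext hw
        rw [hw']
      · have hw' : w = ⟨d.f₁ d.y, d.mem_of_R1_univ hA d.y⟩ := Subtype.ext hw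
        rw [hw']
        exact (d.fact_eq hA hcol₁ φ).symm
    rw [key u hu, key v hv]

/-- Case: all of `V₁` inside `R`, Mono on the `G₂` side with `z`. -/
theorem mono_C5 {R : Set V} (hA : d.R1 R = Set.univ) (hcol₁ : ¬ G₁.Colorable 4)
    {U₂ : Set V₂} (hb₂ : boundary G₂ (insert d.z (d.R2' R)) ⊆ U₂)
    (hs₂ : U₂ ⊆ insert d.z (d.R2' R))
    (hc₂ : ∀ ψ : (G₂.induce (insert d.z (d.R2' R))).Coloring (Fin 4),
      ∀ a b : ↥(insert d.z (d.R2' R)), a.1 ∈ U₂ → b.1 ∈ U₂ → ψ a = ψ b)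
    (hcard₂ : 5 ≤ (insert d.z (d.R2' R)).ncard)
    (hp : potKYOn G R = 9) : Mono G R := by
  have hx : d.x ∈ d.R1 R := hA ▸ Set.mem_univ d.x
  have hy : d.y ∈ d.R1 R := hA ▸ Set.mem_univ d.y
  have hxR : d.f₁ d.x ∈ R := d.mem_of_R1_univ hA d.x
  have hyR : d.f₁ d.y ∈ R := d.mem_of_R1_univ hA d.y
  have hcard : 5 ≤ R.ncard := by
    have h1 := d.ncard_R R
    have h2 : (insert d.z (d.R2' R)).ncard = (d.R2 R).ncard + 1 := by
      rw [Set.ncard_insert_of_notMem (d.z_not_mem_R2' R) (Set.toFinite _), d.ncard_R2']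
    have h3 : 1 ≤ (d.R1 R).ncard := (Set.ncard_pos (Set.toFinite _)).mpr ⟨d.x, hx⟩
    omega
  refine ⟨⟨hp, ⇑d.f₂ '' {u : {w : V₂ // w ≠ d.z} | u ∈ d.R2 R ∧ u.1 ∈ U₂} ∪
    {v : V | (v = d.f₁ d.x ∨ v = d.f₁ d.y) ∧ d.z ∈ U₂}, ?_, ?_, ?_⟩, hcard⟩
  · intro v hv
    rcases d.boundary_cases hv with ⟨a, hab, rfl⟩ | ⟨u, hu, rfl, hcase⟩ | ⟨rfl, -, u, hu, hS⟩ |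
      ⟨rfl, -, u, hu, hadj, -⟩
    · obtain ⟨-, b, hb, -⟩ := hab
      rw [hA] at hb
      exact absurd (Set.mem_univ b) hb
    · rcases hcase with ⟨u', hu', hadj⟩ | ⟨hx1, -⟩ | ⟨hy1, -⟩
      · refine Or.inl ⟨u, ⟨hu, hb₂ ⟨Set.mem_insert_iff.mpr (Or.inr (d.mem_R2'_of hu)),
          u'.1, ?_, hadj⟩⟩, rfl⟩
        rintro (h | h)
        · exact u'.2 h
        · exact d.not_mem_R2'_of hu' h
      · exact absurd hx hx1
      · exact absurd hy hy1
    · refine Or.inr ⟨Or.inl rfl, hb₂ ⟨Set.mem_insert _ _, u.1, ?_, d.hS _ hS⟩⟩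
      rintro (h | h)
      · exact u.2 h
      · exact d.not_mem_R2'_of hu h
    · refine Or.inr ⟨Or.inr rfl, hb₂ ⟨Set.mem_insert _ _, u.1, ?_, hadj⟩⟩
      rintro (h | h)
      · exact u.2 h
      · exact d.not_mem_R2'_of hu h
  · rintro v (⟨u, ⟨hu, -⟩, rfl⟩ | ⟨(rfl | rfl), -⟩)
    · exact hu
    · exact hxR
    · exact hyR
  · intro φ u v hu hv
    have heq : φ ⟨d.f₁ d.x, hxR⟩ = φ ⟨d.f₁ d.y, hyR⟩ := d.fact_eq hA hcol₁ φ
    have hT : ∀ (w : {w : V₂ // w ≠ d.z}) (hw : d.f₂ w ∈ R), G₂.Adj d.z w.1 → w.1 ∉ d.S →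
        φ ⟨d.f₂ w, hw⟩ ≠ φ ⟨d.f₁ d.x, hx⟩ := by
      intro w hw hadj hwS
      rw [heq]
      exact (φ.valid (show (G.induce R).Adj ⟨d.f₁ d.y, hyR⟩ ⟨d.f₂ w, hw⟩ from
        (d.adj_f1y_f2).mpr ⟨hadj, hwS⟩)).symm
    set ψ := d.res2i φ hx hT with hψ
    have key : ∀ w : ↥R,
        w.1 ∈ ⇑d.f₂ '' {u : {w : V₂ // w ≠ d.z} | u ∈ d.R2 R ∧ u.1 ∈ U₂} ∪
          {v : V | (v = d.f₁ d.x ∨ v = d.f₁ d.y) ∧ d.z ∈ U₂} →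
        ∃ (c : V₂) (hc : c ∈ insert d.z (d.R2' R)), c ∈ U₂ ∧ φ w = ψ ⟨c, hc⟩ := by
      rintro w (⟨u', ⟨hu', hu'U⟩, hav⟩ | ⟨(hw | hw), hzU⟩)
      · have hmemQ : u'.1 ∈ insert d.z (d.R2' R) :=
          Set.mem_insert_iff.mpr (Or.inr (d.mem_R2'_of hu'))
        refine ⟨u'.1, hmemQ, hu'U, ?_⟩
        have hw' : w = ⟨d.f₂ u', d.mem_insert_R2'_mem hmemQ u'.2⟩ := Subtype.ext hav.symm
        rw [hw', hψ, d.res2i_f2 φ hx hT u' hmemQ]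
      · refine ⟨d.z, Set.mem_insert _ _, hzU, ?_⟩
        have hw' : w = ⟨d.f₁ d.x, hxR⟩ := Subtype.ext hw
        rw [hw', hψ, d.res2i_z φ hx hT]
      · refine ⟨d.z, Set.mem_insert _ _, hzU, ?_⟩
        have hw' : w = ⟨d.f₁ d.y, hyR⟩ := Subtype.ext hw
        rw [hw', hψ, d.res2i_z φ hx hT]
        exact heq.symm
    obtain ⟨c1, hc1, hc1U, he1⟩ := key u hu
    obtain ⟨c2, hc2, hc2U, he2⟩ := key v hv
    rw [he1, he2]
    exact hc₂ ψ ⟨c1, hc1⟩ ⟨c2, hc2⟩ hc1U hc2U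

/-- Case: `x, y ∈ R`, all of the `G₂` side inside `R`, Mono on the `G₁` side. -/
theorem mono_C6 {R : Set V} (hx : d.x ∈ d.R1 R) (hy : d.y ∈ d.R1 R)
    (hB : d.R2 R = Set.univ) (hcol₂ : ¬ G₂.Colorable 4)
    {U₁ : Set V₁} (hb₁ : boundary G₁ (d.R1 R) ⊆ U₁) (hs₁ : U₁ ⊆ d.R1 R)
    (hc₁ : ∀ ψ : (G₁.induce (d.R1 R)).Coloring (Fin 4), ∀ a b : ↥(d.R1 R),
      a.1 ∈ U₁ → b.1 ∈ U₁ → ψ a = ψ b)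
    (hcard₁ : 5 ≤ (d.R1 R).ncard) (hp : potKYOn G R = 9) : Mono G R := by
  have hcard : 5 ≤ R.ncard := by
    have h1 := d.ncard_R R
    omega
  refine ⟨⟨hp, ⇑d.f₁ '' U₁, ?_, ?_, ?_⟩, hcard⟩
  · intro v hv
    rcases d.boundary_cases hv with ⟨a, hab, rfl⟩ | ⟨u, hu, rfl, hcase⟩ | ⟨-, -, u, hu, -⟩ |
      ⟨-, -, u, hu, -⟩
    · exact ⟨a, hb₁ hab, rfl⟩
    · rcases hcase with ⟨u', hu', -⟩ | ⟨hx1, -⟩ | ⟨hy1, -⟩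
      · exact absurd (hB ▸ Set.mem_univ u') hu'
      · exact absurd hx hx1
      · exact absurd hy hy1
    · exact absurd (hB ▸ Set.mem_univ u) hu
    · exact absurd (hB ▸ Set.mem_univ u) hu
  · rintro v ⟨a, ha, rfl⟩
    exact (hs₁ ha : a ∈ d.R1 R)
  · intro φ u v hu hv
    obtain ⟨a, haU, hav⟩ := hu
    obtain ⟨b, hbU, hbv⟩ := hv
    have ha1 : a ∈ d.R1 R := hs₁ haU
    have hb1 : b ∈ d.R1 R := hs₁ hbU
    have hkey := hc₁ (d.res1_ne φ hx hy (d.fact_ne hx hy hB hcol₂ φ)) ⟨a, ha1⟩ ⟨b, hb1⟩ haU hbU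
    have hu' : u = ⟨d.f₁ a, ha1⟩ := Subtype.ext hav.symm
    have hv' : v = ⟨d.f₁ b, hb1⟩ := Subtype.ext hbv.symm
    rw [hu', hv']
    exact hkey

end CompData

end Comp9
section Assembly

set_option linter.unusedSectionVars false

variable {V V₁ V₂ : Type} {G : SimpleGraph V} {G₁ : SimpleGraph V₁} {G₂ : SimpleGraph V₂}

namespace CompData

theorem case_X (d : CompData G G₁ G₂) [Finite V] (hM₁ : MainP G₁) (hM₂ : MainP G₂)
    {R : Set V} (hcard1 : R.ncard ≠ 1)
    (hx : d.x ∈ d.R1 R) (hy : d.y ∉ d.R1 R) (hplt : potKYOn G R < 12) : Mono G R := by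
  obtain ⟨hf₁, hn₁, he₁, hcol₁, htri₁⟩ := hM₁
  obtain ⟨hf₂, hn₂, he₂, hcol₂, htri₂⟩ := hM₂
  haveI := hf₁; haveI := hf₂
  have hAne : (d.R1 R).Nonempty := ⟨d.x, hx⟩
  have hAproper : d.R1 R ≠ Set.univ := fun h => hy (h ▸ Set.mem_univ d.y)
  have htriA := htri₁ _ hAne hAproper
  have hp₁9 : (9:ℝ) ≤ potKYOn G₁ (d.R1 R) := pot_ge_nine htriA
  have hsplit := d.pot_split_x hx hy
  set tS : Set {w : V₂ // w ≠ d.z} := {w ∈ d.R2 R | G₂.Adj d.z w.1 ∧ w.1 ∉ d.S} with htS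
  have htnn : (0:ℝ) ≤ (tS.ncard : ℝ) := Nat.cast_nonneg _
  by_cases hBuniv : d.R2 R = Set.univ
  · have hQuniv := d.insert_R2'_univ hBuniv
    rw [hQuniv, potKYOn_univ_eq_five he₂] at hsplit
    have ht1 : 1 ≤ tS.ncard := by
      obtain ⟨w, hwN, hwS⟩ := d.hTne
      have hadj : G₂.Adj d.z w := hwN
      have hmem : (⟨w, hadj.ne'⟩ : {w : V₂ // w ≠ d.z}) ∈ tS :=
        ⟨hBuniv ▸ Set.mem_univ _, hadj, hwS⟩
      exact (Set.ncard_pos (Set.toFinite _)).mpr ⟨_, hmem⟩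
    have ht2 : tS.ncard ≤ 1 := by
      by_contra hc
      have h2 : (2:ℝ) ≤ (tS.ncard : ℝ) := by exact_mod_cast (by omega : 2 ≤ tS.ncard)
      linarith
    have ht : tS.ncard = 1 := le_antisymm ht2 ht1
    have hpp : potKYOn G R = potKYOn G₁ (d.R1 R) := by
      rw [hsplit, ht]; push_cast; ring
    obtain ⟨w₀, hw₀⟩ := Set.ncard_eq_one.mp ht
    have hT1 : ∀ u : {w : V₂ // w ≠ d.z}, G₂.Adj d.z u.1 → u.1 ∉ d.S → u = w₀ := by
      intro u h1 h2
      have : u ∈ tS := ⟨hBuniv ▸ Set.mem_univ u, h1, h2⟩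
      rw [hw₀] at this
      exact this
    rcases htriA with hA1 | hA12 | hAM
    · obtain ⟨a, ha⟩ := Set.ncard_eq_one.mp hA1
      have hax : a = d.x := (show d.x ∈ ({a} : Set V₁) from ha ▸ hx).symm
      rw [hax] at ha
      refine d.mono_C2 hx hy hBuniv hcol₂ hn₂ hT1 (U₁ := {d.x}) ?_ ?_ ?_ rfl ?_
      · intro v hv
        have := hv.1
        rw [ha] at this
        exact this
      · rw [ha]
      · intro ψ a b haU hbU
        have hab : a = b := Subtype.ext (haU.trans hbU.symm)
        rw [hab]
      · rw [hpp, potKYOn_ncard_one G₁ hA1]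
    · linarith
    · obtain ⟨⟨hp₁, U₁, hb₁, hs₁, hc₁⟩, hcard₁⟩ := hAM
      have hx₁ : d.x ∈ U₁ := hb₁ ⟨hx, d.y, hy, d.hxy⟩
      exact d.mono_C2 hx hy hBuniv hcol₂ hn₂ hT1 hb₁ hs₁ hc₁ hx₁ (by rw [hpp, hp₁])
  · by_cases hBemp : d.R2 R = ∅
    · have hR2' : d.R2' R = ∅ := by rw [d.R2'_def, hBemp, Set.image_empty]
      have htSempty : tS.ncard = 0 := by
        rw [htS, hBemp]
        simp
      have hQ9 : potKYOn G₂ (insert d.z (d.R2' R)) = 9 := by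
        rw [hR2', show insert d.z (∅ : Set V₂) = {d.z} by simp]
        exact potKYOn_singleton G₂ d.z
      have hpp : potKYOn G R = potKYOn G₁ (d.R1 R) := by
        rw [hsplit, hQ9, htSempty]; push_cast; ring
      have hAcard : (d.R1 R).ncard ≠ 1 := by
        have := d.ncard_R R
        rw [hBemp, Set.ncard_empty] at this
        omega
      rcases htriA with h | h | hAM
      · exact absurd h hAcard
      · linarith
      · exact d.mono_T1 hBemp (fun h => hy h.2) hAM (by rw [hpp, hAM.1.1])
    · have hQne : (insert d.z (d.R2' R)).Nonempty := ⟨d.z, Set.mem_insert _ _⟩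
      have hQproper : insert d.z (d.R2' R) ≠ Set.univ := fun h => hBuniv (d.R2_univ_of_insert h)
      have htriQ := htri₂ _ hQne hQproper
      have hp₂9 := pot_ge_nine htriQ
      have hQcard : (insert d.z (d.R2' R)).ncard = (d.R2 R).ncard + 1 := by
        rw [Set.ncard_insert_of_notMem (d.z_not_mem_R2' R) (Set.toFinite _), d.ncard_R2']
      have hBpos : 1 ≤ (d.R2 R).ncard := (Set.ncard_pos (Set.toFinite _)).mpr
        (Set.nonempty_iff_ne_empty.mpr hBemp)
      have ht0 : tS.ncard = 0 := by
        by_contra hc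
        have h1 : (1:ℝ) ≤ (tS.ncard : ℝ) := by exact_mod_cast (by omega : 1 ≤ tS.ncard)
        linarith
      have htB : ∀ u : {w : V₂ // w ≠ d.z}, u ∈ d.R2 R → G₂.Adj d.z u.1 → u.1 ∉ d.S →
          False := by
        intro u h1 h2 h3
        have hmem : u ∈ tS := ⟨h1, h2, h3⟩
        rw [Set.ncard_eq_zero (Set.toFinite _)] at ht0
        rw [ht0] at hmem
        exact hmem
      rcases htriQ with h | h | hMQ
      · omega
      · linarith
      · obtain ⟨⟨hp₂, U₂, hb₂, hs₂, hc₂⟩, hcard₂⟩ := hMQ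
        have hpp : potKYOn G R = potKYOn G₁ (d.R1 R) := by
          rw [hsplit, hp₂, ht0]; push_cast; ring
        rcases htriA with hA1 | hA12 | hAM
        · obtain ⟨a, ha⟩ := Set.ncard_eq_one.mp hA1
          have hax : a = d.x := (show d.x ∈ ({a} : Set V₁) from ha ▸ hx).symm
          rw [hax] at ha
          refine d.mono_C3 hx hy htB hb₂ hs₂ hc₂ hcard₂ (U₁ := {d.x}) ?_ ?_ ?_ rfl ?_
          · intro v hv
            have := hv.1
            rw [ha] at this
            exact this
          · rw [ha]
          · intro ψ a b haU hbU
            have hab : a = b := Subtype.ext (haU.trans hbU.symm)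
            rw [hab]
          · rw [hpp, potKYOn_ncard_one G₁ hA1]
        · linarith
        · obtain ⟨⟨hp₁, U₁, hb₁, hs₁, hc₁⟩, hcard₁A⟩ := hAM
          have hx₁ : d.x ∈ U₁ := hb₁ ⟨hx, d.y, hy, d.hxy⟩
          exact d.mono_C3 hx hy htB hb₂ hs₂ hc₂ hcard₂ hb₁ hs₁ hc₁ hx₁ (by rw [hpp, hp₁])

theorem case_XY (d : CompData G G₁ G₂) [Finite V] (hM₁ : MainP G₁) (hM₂ : MainP G₂)
    {R : Set V} (hproper : R ≠ Set.univ)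
    (hx : d.x ∈ d.R1 R) (hy : d.y ∈ d.R1 R) (hplt : potKYOn G R < 12) : Mono G R := by
  obtain ⟨hf₁, hn₁, he₁, hcol₁, htri₁⟩ := hM₁
  obtain ⟨hf₂, hn₂, he₂, hcol₂, htri₂⟩ := hM₂
  haveI := hf₁; haveI := hf₂
  have hsplit := d.pot_split_both hx hy
  by_cases hAuniv : d.R1 R = Set.univ
  · by_cases hBuniv : d.R2 R = Set.univ
    · exact absurd (d.univ_of_R1_R2 hAuniv hBuniv) hproper
    by_cases hBemp : d.R2 R = ∅
    · have hR2' : d.R2' R = ∅ := by rw [d.R2'_def, hBemp, Set.image_empty]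
      have hQ9 : potKYOn G₂ (insert d.z (d.R2' R)) = 9 := by
        rw [hR2', show insert d.z (∅ : Set V₂) = {d.z} by simp]
        exact potKYOn_singleton G₂ d.z
      rw [hAuniv, potKYOn_univ_eq_five he₁, hQ9] at hsplit
      exact d.mono_C4 hAuniv hBemp hcol₁ hn₁ (by rw [hsplit]; push_cast; ring)
    · have hQne : (insert d.z (d.R2' R)).Nonempty := ⟨d.z, Set.mem_insert _ _⟩
      have hQproper : insert d.z (d.R2' R) ≠ Set.univ := fun h => hBuniv (d.R2_univ_of_insert h)
      have htriQ := htri₂ _ hQne hQproper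
      have hQcard : (insert d.z (d.R2' R)).ncard = (d.R2 R).ncard + 1 := by
        rw [Set.ncard_insert_of_notMem (d.z_not_mem_R2' R) (Set.toFinite _), d.ncard_R2']
      have hBpos : 1 ≤ (d.R2 R).ncard := (Set.ncard_pos (Set.toFinite _)).mpr
        (Set.nonempty_iff_ne_empty.mpr hBemp)
      rw [hAuniv, potKYOn_univ_eq_five he₁] at hsplit
      rcases htriQ with h | h | hMQ
      · omega
      · linarith
      · obtain ⟨⟨hp₂, U₂, hb₂, hs₂, hc₂⟩, hcard₂⟩ := hMQ
        exact d.mono_C5 hAuniv hcol₁ hb₂ hs₂ hc₂ hcard₂ (by rw [hsplit, hp₂]; push_cast; ring)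
  · have hAne : (d.R1 R).Nonempty := ⟨d.x, hx⟩
    have htriA := htri₁ _ hAne hAuniv
    have hp₁9 := pot_ge_nine htriA
    by_cases hBuniv : d.R2 R = Set.univ
    · rw [d.insert_R2'_univ hBuniv, potKYOn_univ_eq_five he₂] at hsplit
      have hAcard : (d.R1 R).ncard ≠ 1 := by
        intro h
        obtain ⟨a, ha⟩ := Set.ncard_eq_one.mp h
        have h1 : d.x = a := by rw [ha] at hx; exact hx
        have h2 : d.y = a := by rw [ha] at hy; exact hy
        exact d.x_ne_y (h1.trans h2.symm)
      rcases htriA with h | h | hAM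
      · exact absurd h hAcard
      · linarith
      · obtain ⟨⟨hp₁, U₁, hb₁, hs₁, hc₁⟩, hcard₁⟩ := hAM
        exact d.mono_C6 hx hy hBuniv hcol₂ hb₁ hs₁ hc₁ hcard₁ (by rw [hsplit, hp₁]; push_cast; ring)
    · have hQne : (insert d.z (d.R2' R)).Nonempty := ⟨d.z, Set.mem_insert _ _⟩
      have hQproper : insert d.z (d.R2' R) ≠ Set.univ := fun h => hBuniv (d.R2_univ_of_insert h)
      have hp₂9 := pot_ge_nine (htri₂ _ hQne hQproper)
      linarith

theorem case_none (d : CompData G G₁ G₂) [Finite V] (hM₁ : MainP G₁) (hM₂ : MainP G₂)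
    {R : Set V} (hne : R.Nonempty) (hcard1 : R.ncard ≠ 1)
    (hx : d.x ∉ d.R1 R) (hy : d.y ∉ d.R1 R) (hplt : potKYOn G R < 12) : Mono G R := by
  obtain ⟨hf₁, hn₁, he₁, hcol₁, htri₁⟩ := hM₁
  obtain ⟨hf₂, hn₂, he₂, hcol₂, htri₂⟩ := hM₂
  haveI := hf₁; haveI := hf₂
  have hsplit := d.pot_split_none hx hy
  have hncR := d.ncard_R R
  by_cases hAemp : d.R1 R = ∅
  · rw [hAemp, potKYOn_empty] at hsplit
    have hBne : (d.R2' R).Nonempty := by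
      rw [Set.nonempty_iff_ne_empty]
      intro hc
      have hB : d.R2 R = ∅ := by
        rw [← Set.not_nonempty_iff_eq_empty]
        rintro ⟨u, hu⟩
        exact Set.not_nonempty_iff_eq_empty.mpr hc ⟨u.1, d.mem_R2'_of hu⟩
      obtain ⟨v, hv⟩ := hne
      rcases d.cover v with ⟨a, rfl⟩ | ⟨u, rfl⟩
      · exact (hAemp ▸ hv : a ∈ (∅ : Set V₁))
      · exact (hB ▸ hv : u ∈ (∅ : Set {w : V₂ // w ≠ d.z}))
    have hBproper : d.R2' R ≠ Set.univ := fun h => d.z_not_mem_R2' R (h ▸ Set.mem_univ d.z)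
    have htriB := htri₂ _ hBne hBproper
    have hBcard : (d.R2' R).ncard ≠ 1 := by
      rw [d.ncard_R2']
      rw [hAemp, Set.ncard_empty] at hncR
      omega
    rcases htriB with h | h | hMB
    · exact absurd h hBcard
    · linarith
    · exact d.mono_T2 hAemp hMB (by rw [hsplit, hMB.1.1]; norm_num)
  · by_cases hBemp : d.R2 R = ∅
    · have hR2' : d.R2' R = ∅ := by rw [d.R2'_def, hBemp, Set.image_empty]
      rw [hR2', potKYOn_empty] at hsplit
      have hAne : (d.R1 R).Nonempty := Set.nonempty_iff_ne_empty.mpr hAemp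
      have hAproper : d.R1 R ≠ Set.univ := fun h => hx (h ▸ Set.mem_univ d.x)
      have htriA := htri₁ _ hAne hAproper
      have hAcard : (d.R1 R).ncard ≠ 1 := by
        rw [hBemp, Set.ncard_empty] at hncR
        omega
      rcases htriA with h | h | hMA
      · exact absurd h hAcard
      · linarith
      · exact d.mono_T1 hBemp (fun h => hx h.1) hMA (by rw [hsplit, hMA.1.1]; push_cast; ring)
    · have hAne : (d.R1 R).Nonempty := Set.nonempty_iff_ne_empty.mpr hAemp
      have hAproper : d.R1 R ≠ Set.univ := fun h => hx (h ▸ Set.mem_univ d.x)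
      have hp₁9 := pot_ge_nine (htri₁ _ hAne hAproper)
      have hBne' : (d.R2' R).Nonempty := by
        obtain ⟨u, hu⟩ := Set.nonempty_iff_ne_empty.mpr hBemp
        exact ⟨u.1, d.mem_R2'_of hu⟩
      have hBproper : d.R2' R ≠ Set.univ := fun h => d.z_not_mem_R2' R (h ▸ Set.mem_univ d.z)
      have hp₂9 := pot_ge_nine (htri₂ _ hBne' hBproper)
      linarith

end CompData

end Assembly
section Final

set_option linter.unusedSectionVars false

variable {V V₁ V₂ : Type} {G : SimpleGraph V} {G₁ : SimpleGraph V₁} {G₂ : SimpleGraph V₂}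

theorem CompData.mainP_comp (d : CompData G G₁ G₂) (hM₁ : MainP G₁) (hM₂ : MainP G₂) :
    MainP G := by
  haveI := hM₁.1
  haveI := hM₂.1
  haveI hfV : Finite V := d.finite_V
  have hn₁ := hM₁.2.1
  have he₁ := hM₁.2.2.1
  have hcol₁ := hM₁.2.2.2.1
  have hn₂ := hM₂.2.1
  have he₂ := hM₂.2.2.1
  have hcol₂ := hM₂.2.2.2.1
  have hcV := d.card_V
  have h5 : potKYOn G Set.univ = 5 := by
    have hx : d.x ∈ d.R1 (Set.univ : Set V) := Set.mem_preimage.mpr (Set.mem_univ _)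
    have hy : d.y ∈ d.R1 (Set.univ : Set V) := Set.mem_preimage.mpr (Set.mem_univ _)
    have hsp := d.pot_split_both hx hy
    have hA : d.R1 (Set.univ : Set V) = Set.univ := Set.preimage_univ
    have hBu : d.R2 (Set.univ : Set V) = Set.univ := Set.preimage_univ
    rw [hA, d.insert_R2'_univ hBu, potKYOn_univ_eq_five he₁, potKYOn_univ_eq_five he₂] at hsp
    rw [hsp]; norm_num
  refine ⟨hfV, by omega, edge_count_of_pot_five h5, d.not_colorable hcol₁ hcol₂, ?_⟩
  intro R hne hproper
  by_cases h1 : R.ncard = 1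
  · exact Or.inl h1
  by_cases h12 : (12:ℝ) ≤ potKYOn G R
  · exact Or.inr (Or.inl h12)
  push_neg at h12
  refine Or.inr (Or.inr ?_)
  by_cases hx : d.x ∈ d.R1 R <;> by_cases hy : d.y ∈ d.R1 R
  · exact d.case_XY hM₁ hM₂ hproper hx hy h12
  · exact d.case_X hM₁ hM₂ h1 hx hy h12
  · exact d.symm.case_X hM₁ hM₂ h1 hy hx h12
  · exact d.case_none hM₁ hM₂ hne h1 hx hy h12

theorem main5Ore : ∀ {V : Type} {G : SimpleGraph V}, Is5Ore G → MainP G := by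
  intro V G h
  induction h with
  | k5 h => exact mainP_K5 h
  | ore h₁ h₂ hcomp ih₁ ih₂ =>
      obtain ⟨d⟩ := isOreComposition_nonempty hcomp
      exact d.mainP_comp ih₁ ih₂

end Final
/-- If `G` is 5-Ore and `R ⊊ V(G)` with `|R| ≥ 5` and `p_KY(R) < 12`, then `R` is collapsible
and `p_KY(R) = 9`. -/
theorem stmt_11 {V : Type} [Fintype V] (G : SimpleGraph V) (h5 : Is5Ore G)
    (R : Set V) (hR : R ≠ Set.univ) (hR5 : 5 ≤ R.ncard) (hp : potKYOn G R < 12) :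
    Collapsible G R ∧ potKYOn G R = 9 := by
  obtain ⟨hf, hn, he, hcol, htri⟩ := main5Ore h5
  have hne : R.Nonempty := by
    rw [Set.nonempty_iff_ne_empty]
    rintro rfl
    rw [Set.ncard_empty] at hR5
    omega
  rcases htri R hne hR with h | h | h
  · omega
  · linarith
  · obtain ⟨⟨hp9, U, hb, hs, hc⟩, hcard⟩ := h
    exact ⟨⟨hR, hR5, fun φ u v hu hv => hc φ u v (hb hu) (hb hv)⟩, hp9⟩

end Postle
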